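/- arXiv:1809.10033 — 7 statements merged into one kernel-verified Lean document; each statement's English description precedes it below -/
import Mathlib

section
/- Let n ≥ 1 and let z ∈ ℂ with z ∉ {1−n, 2−n, …, n−2, n−1}. Then each element z + J_i (1 ≤ i ≤ n) is invertible in ℂ[S_n], the element Ω_{n,z} = ∑_{σ ∈ S_n} z^{#σ} σ is invertible in ℂ[S_n], and Ω_{n,z}^{−1} = (z + J_1)^{−1}(z + J_2)^{−1}⋯(z + J_n)^{−1}. -/
/-!
Common definitions: permutations of `Fin n` play the role of the symmetric
group `S_n` on `[n] = {1,…,n}` (0-indexed).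
-/

/-- The number of cycles of a permutation of `Fin n`, fixed points counted as cycles:
the number of fixed points plus the number of nontrivial cycles. -/
def cycleCount {n : ℕ} (σ : Equiv.Perm (Fin n)) : ℕ :=
  (n - σ.support.card) + Multiset.card σ.cycleType

/-- The top (largest moved point) of a permutation, as a natural number
(via `Fin.val`).  For a transposition `(a b)` with `a < b` this is `b`. -/
def top {n : ℕ} (τ : Equiv.Perm (Fin n)) : ℕ :=
  τ.support.sup Fin.val

/-- The ordered product `f 0 * f 1 * ⋯ * f (r-1)` of a tuple of permutations. -/
def tupleProd {n r : ℕ} (f : Fin r → Equiv.Perm (Fin n)) : Equiv.Perm (Fin n) :=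
  (List.ofFn f).prod

/-- A tuple all of whose entries are transpositions. -/
def IsTranspositionTuple {n r : ℕ} (f : Fin r → Equiv.Perm (Fin n)) : Prop :=
  ∀ i, (f i).IsSwap

/-- A weakly monotone tuple of transpositions: the tops are weakly increasing. -/
def WeaklyMonotoneTuple {n r : ℕ} (f : Fin r → Equiv.Perm (Fin n)) : Prop :=
  IsTranspositionTuple f ∧ ∀ i j : Fin r, i ≤ j → top (f i) ≤ top (f j)

/-- A strictly monotone tuple of transpositions: the tops are strictly increasing. -/
def StrictlyMonotoneTuple {n r : ℕ} (f : Fin r → Equiv.Perm (Fin n)) : Prop :=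
  IsTranspositionTuple f ∧ ∀ i j : Fin r, i < j → top (f i) < top (f j)

/-- The subgroup generated by a set of permutations acts transitively on `Fin n`. -/
def ActsTransitively {n : ℕ} (S : Set (Equiv.Perm (Fin n))) : Prop :=
  ∀ x y : Fin n, ∃ g ∈ Subgroup.closure S, g x = y

/-- The Jucys–Murphy element `J_i = ∑_{j<i} (j i)` in the group algebra `ℂ[S_n]`
(`J_1 = 0` for the smallest index). -/
noncomputable def JM (n : ℕ) (i : Fin n) : MonoidAlgebra ℂ (Equiv.Perm (Fin n)) :=
  ∑ j ∈ Finset.Iio i, MonoidAlgebra.of ℂ (Equiv.Perm (Fin n)) (Equiv.swap j i)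

/-- `Ω_{n,z} = ∑_{σ ∈ S_n} z^{#σ} σ` in the group algebra `ℂ[S_n]`. -/
noncomputable def Omega (n : ℕ) (z : ℂ) : MonoidAlgebra ℂ (Equiv.Perm (Fin n)) :=
  ∑ σ : Equiv.Perm (Fin n), z ^ cycleCount σ • MonoidAlgebra.of ℂ (Equiv.Perm (Fin n)) σ

/-- The cycle type of a permutation as a partition of `n`: the multiset of cycle
lengths, fixed points contributing parts equal to `1`. -/
def fullCycleType {n : ℕ} (σ : Equiv.Perm (Fin n)) : Multiset ℕ :=
  σ.cycleType + Multiset.replicate (n - σ.support.card) 1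


set_option linter.unusedSectionVars false
set_option linter.unusedVariables false
set_option linter.unnecessarySimpa false

section AuxCombinatorics

open Finset Equiv Equiv.Perm

variable {α : Type*} [DecidableEq α] [Fintype α]

lemma mul_swap_apply_left (c : Perm α) (j k : α) : (c * Equiv.swap j k) j = c k := by
  simp [Equiv.Perm.mul_apply, Equiv.swap_apply_left]

lemma mul_swap_apply_right (c : Perm α) (j k : α) : (c * Equiv.swap j k) k = c j := by
  simp [Equiv.Perm.mul_apply, Equiv.swap_apply_right]

lemma mul_swap_apply_other (c : Perm α) {j k t : α} (htj : t ≠ j) (htk : t ≠ k) :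
    (c * Equiv.swap j k) t = c t := by
  simp [Equiv.Perm.mul_apply, Equiv.swap_apply_of_ne_of_ne htj htk]

lemma sameCycle_mul_swap_pow {c : Perm α} (hc : c.IsCycle) {j k : α}
    (hj : c j ≠ j) (hk : c k = k) (hjk : j ≠ k) (m : ℕ) :
    (c * Equiv.swap j k).SameCycle j ((c ^ m) j) := by
  induction m with
  | zero => simpa using Equiv.Perm.SameCycle.refl _ _
  | succ m ih =>
    set c' := c * Equiv.swap j k with hc'
    have ht : (c ^ m) j ∈ c.support := by
      rw [Equiv.Perm.pow_apply_mem_support]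
      exact Equiv.Perm.mem_support.mpr hj
    have htk : (c ^ m) j ≠ k := by
      intro h
      exact (Equiv.Perm.mem_support.mp ht) (by rw [h]; exact hk)
    by_cases htj : (c ^ m) j = j
    · have h1 : (c ^ (m + 1)) j = c j := by
        rw [pow_succ', Equiv.Perm.mul_apply, htj]
      have h2 : (c' ^ 2) j = c j := by
        have e1 : c' j = k := by rw [hc']; simpa [hk] using mul_swap_apply_left c j k
        have e2 : c' k = c j := mul_swap_apply_right c j k
        calc (c' ^ 2) j = c' (c' j) := by rw [sq, Equiv.Perm.mul_apply]
        _ = c j := by rw [e1, e2]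
      rw [h1, ← h2]
      exact ⟨2, rfl⟩
    · have h1 : c' ((c ^ m) j) = (c ^ (m + 1)) j := by
        rw [hc', mul_swap_apply_other c htj htk, pow_succ', Equiv.Perm.mul_apply]
      rw [← h1]
      exact Equiv.Perm.sameCycle_apply_right.mpr ih

lemma support_mul_swap {c : Perm α} {j k : α}
    (hj : c j ≠ j) (hk : c k = k) (hjk : j ≠ k) :
    (c * Equiv.swap j k).support = insert k c.support := by
  have hcjk : c j ≠ k := by
    intro h
    exact hjk (c.injective (h.trans hk.symm))
  ext t
  simp only [Equiv.Perm.mem_support, Finset.mem_insert]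
  by_cases htk : t = k
  · subst htk
    rw [mul_swap_apply_right]
    simp [hcjk]
  · by_cases htj : t = j
    · subst htj
      have h1 : (c * Equiv.swap t k) t = k := by
        rw [mul_swap_apply_left, hk]
      rw [h1]
      simp [Ne.symm htk, hj, htk]
    · rw [mul_swap_apply_other c htj htk]
      simp [htk]

lemma isCycle_mul_swap {c : Perm α} (hc : c.IsCycle) {j k : α}
    (hj : c j ≠ j) (hk : c k = k) (hjk : j ≠ k) :
    (c * Equiv.swap j k).IsCycle := by
  set c' := c * Equiv.swap j k with hc'
  have e1 : c' j = k := by rw [hc', mul_swap_apply_left, hk]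
  refine ⟨j, by rw [e1]; exact Ne.symm hjk, ?_⟩
  intro y hy
  have hy' : y ∈ c'.support := Equiv.Perm.mem_support.mpr hy
  rw [hc', support_mul_swap hj hk hjk, Finset.mem_insert] at hy'
  rcases hy' with rfl | hy'
  · exact ⟨1, by simpa using e1⟩
  · obtain ⟨m, hm⟩ := hc.exists_pow_eq hj (Equiv.Perm.mem_support.mp hy')
    rw [← hm]
    exact sameCycle_mul_swap_pow hc hj hk hjk m

/-- Multiplying by a swap of two fixed points: support grows by 2, cycle count grows by 1. -/
lemma stats_mul_swap_fixed {σ : Perm α} {j k : α}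
    (hj : σ j = j) (hk : σ k = k) (hjk : j ≠ k) :
    (σ * Equiv.swap j k).support.card = σ.support.card + 2 ∧
      Multiset.card (σ * Equiv.swap j k).cycleType = Multiset.card σ.cycleType + 1 := by
  have hdisj : σ.Disjoint (Equiv.swap j k) := by
    intro x
    by_cases hxj : x = j
    · subst hxj; exact Or.inl hj
    · by_cases hxk : x = k
      · subst hxk; exact Or.inl hk
      · exact Or.inr (Equiv.swap_apply_of_ne_of_ne hxj hxk)
  constructor
  · rw [hdisj.card_support_mul, Equiv.Perm.card_support_swap hjk]
  · rw [hdisj.cycleType_mul, Multiset.card_add, (Equiv.Perm.isCycle_swap hjk).cycleType]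
    simp

/-- Multiplying by a swap of a moved point with a fixed point:
support grows by 1, cycle count is unchanged. -/
lemma stats_mul_swap_moved {σ : Perm α} {j k : α}
    (hj : σ j ≠ j) (hk : σ k = k) :
    (σ * Equiv.swap j k).support.card = σ.support.card + 1 ∧
      Multiset.card (σ * Equiv.swap j k).cycleType = Multiset.card σ.cycleType := by
  have hjk : j ≠ k := by
    intro h; subst h; exact hj hk
  set c := σ.cycleOf j with hcdef
  have hmem : c ∈ σ.cycleFactorsFinset := Equiv.Perm.cycleOf_mem_cycleFactorsFinset_iff.mpr (Equiv.Perm.mem_support.mpr hj)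
  have hc : c.IsCycle := σ.isCycle_cycleOf hj
  have hdisj : (σ * c⁻¹).Disjoint c := Equiv.Perm.disjoint_mul_inv_of_mem_cycleFactorsFinset hmem
  set ρ := σ * c⁻¹ with hρdef
  have hσ : σ = ρ * c := by rw [hρdef]; group
  have hcj : c j ≠ j := by rw [hcdef, Equiv.Perm.cycleOf_apply_self]; exact hj
  have hsuppc : c.support ⊆ σ.support := σ.support_cycleOf_le j
  have hck : c k = k := by
    by_contra h
    exact (Equiv.Perm.mem_support.mp (hsuppc (Equiv.Perm.mem_support.mpr h))) hk
  have hkc : k ∉ c.support := fun h => (Equiv.Perm.mem_support.mp h) hck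
  have hkρ : k ∉ ρ.support := by
    intro h
    have h2 : ρ.support ⊆ σ.support ∪ c⁻¹.support := Equiv.Perm.support_mul_le _ _
    have h3 := h2 h
    rw [Equiv.Perm.support_inv] at h3
    rcases Finset.mem_union.mp h3 with h4 | h4
    · exact (Equiv.Perm.mem_support.mp h4) hk
    · exact hkc h4
  set c' := c * Equiv.swap j k with hc'def
  have hc'supp : c'.support = insert k c.support := support_mul_swap hcj hck hjk
  have hc'cyc : c'.IsCycle := isCycle_mul_swap hc hcj hck hjk
  have hdisj' : ρ.Disjoint c' := by
    rw [Equiv.Perm.disjoint_iff_disjoint_support, hc'supp]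
    rw [Equiv.Perm.disjoint_iff_disjoint_support] at hdisj
    rw [Finset.disjoint_insert_right]
    exact ⟨hkρ, hdisj⟩
  have hπ : σ * Equiv.swap j k = ρ * c' := by rw [hσ, hc'def]; group
  have hcardc' : c'.support.card = c.support.card + 1 := by
    rw [hc'supp, Finset.card_insert_of_notMem hkc]
  constructor
  · rw [hπ, hdisj'.card_support_mul, hcardc', hσ, hdisj.card_support_mul]
    ring
  · rw [hπ, hdisj'.cycleType_mul, Multiset.card_add, hc'cyc.cycleType,
      hσ, hdisj.cycleType_mul, Multiset.card_add, hc.cycleType]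
    simp

end AuxCombinatorics

open Finset Equiv Equiv.Perm


namespace JMaux

variable {n : ℕ}

local notation "of'" => MonoidAlgebra.of ℂ (Equiv.Perm (Fin n))

lemma of_mul_of (σ τ : Equiv.Perm (Fin n)) : of' σ * of' τ = of' (σ * τ) :=
  (map_mul (MonoidAlgebra.of ℂ (Equiv.Perm (Fin n))) σ τ).symm

/-- conjugation of `JM` by a permutation fixing `j` and stabilizing `Iio j`. -/
lemma of_mul_JM (j : Fin n) (g : Equiv.Perm (Fin n)) (hgj : g j = j)
    (hg : ∀ b : Fin n, b < j → g b < j) :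
    of' g * JM n j = JM n j * of' g := by
  unfold JM
  rw [Finset.mul_sum, Finset.sum_mul]
  have key : ∀ b ∈ Finset.Iio j, of' g * of' (Equiv.swap b j)
      = of' (Equiv.swap (g b) j) * of' g := by
    intro b _
    rw [of_mul_of, of_mul_of]
    congr 1
    have h1 : Equiv.swap (g b) (g j) = g * Equiv.swap b j * g⁻¹ := Equiv.swap_apply_apply g b j
    rw [hgj] at h1
    rw [h1]
    group
  rw [Finset.sum_congr rfl key]
  refine Finset.sum_bij' (fun b _ => g b) (fun b _ => g⁻¹ b) ?_ ?_ ?_ ?_ ?_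
  · intro b hb
    rw [Finset.mem_Iio] at hb ⊢
    exact hg b hb
  · intro b hb
    rw [Finset.mem_Iio] at hb ⊢
    by_contra h
    push_neg at h
    -- g⁻¹ b ≥ j; look at orbit: g maps Iio j into itself injectively hence onto
    have : ∀ x : Fin n, x < j → g x < j := hg
    -- g restricted to Iio j is injective from Iio j to Iio j, so surjective
    have hsurj : ∀ y : Fin n, y < j → ∃ x, x < j ∧ g x = y := by
      intro y hy
      classical
      have hinj : Set.InjOn g {x : Fin n | x < j} := fun a _ b _ hab => g.injective hab
      have hmaps : Set.MapsTo g {x : Fin n | x < j} {x : Fin n | x < j} := fun x hx => hg x hx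
      have hfin : Set.Finite {x : Fin n | x < j} := Set.toFinite _
      have hsurjon := Set.Finite.surjOn_iff_bijOn_of_mapsTo hfin hmaps
      have hbij := (Set.Finite.injOn_iff_bijOn_of_mapsTo hfin hmaps).mp hinj
      obtain ⟨x, hx, hx2⟩ := hbij.surjOn hy
      exact ⟨x, hx, hx2⟩
    obtain ⟨x, hx, hx2⟩ := hsurj b hb
    have : g⁻¹ b = x := by rw [← hx2]; simp
    rw [this] at h
    exact absurd hx (not_lt.mpr h)
  · intro b _; simp
  · intro b _; simp
  · intro b _; rfl

lemma JM_comm_swap (i j : Fin n) (hij : i < j) (a : Fin n) (ha : a < i) :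
    of' (Equiv.swap a i) * JM n j = JM n j * of' (Equiv.swap a i) := by
  apply of_mul_JM
  · apply Equiv.swap_apply_of_ne_of_ne
    · exact (lt_trans ha hij).ne'
    · exact hij.ne'
  · intro b hb
    by_cases hba : b = a
    · subst hba; rwa [Equiv.swap_apply_left]
    · by_cases hbi : b = i
      · subst hbi
        rw [Equiv.swap_apply_right]
        exact lt_trans ha hij
      · rwa [Equiv.swap_apply_of_ne_of_ne hba hbi]

lemma JM_comm_of_lt (i j : Fin n) (h : i < j) : Commute (JM n i) (JM n j) := by
  show JM n i * JM n j = JM n j * JM n i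
  nth_rewrite 1 [JM]
  nth_rewrite 3 [JM]
  rw [Finset.sum_mul, Finset.mul_sum]
  apply Finset.sum_congr rfl
  intro a ha
  exact JM_comm_swap i j h a (Finset.mem_Iio.mp ha)

lemma JM_comm (i j : Fin n) : Commute (JM n i) (JM n j) := by
  rcases lt_trichotomy i j with h | h | h
  · exact JM_comm_of_lt i j h
  · subst h; rfl
  · exact (JM_comm_of_lt j i h).symm

lemma JM_rec (i i' : Fin n) (h : (i' : ℕ) + 1 = (i : ℕ)) :
    JM n i = of' (Equiv.swap i' i) * JM n i' * of' (Equiv.swap i' i)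
      + of' (Equiv.swap i' i) := by
  have hi'i : i' < i := by rw [Fin.lt_def]; omega
  have hIio : Finset.Iio i = insert i' (Finset.Iio i') := by
    ext b
    simp only [Finset.mem_Iio, Finset.mem_insert, Fin.lt_def]
    constructor
    · intro hb
      rcases Nat.lt_or_ge (b : ℕ) (i' : ℕ) with h2 | h2
      · exact Or.inr h2
      · left
        have : (b : ℕ) = (i' : ℕ) := by omega
        exact Fin.ext this
    · rintro (rfl | hb) <;> omega
  unfold JM
  rw [hIio, Finset.sum_insert (by simp)]
  rw [Finset.mul_sum, Finset.sum_mul, add_comm]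
  congr 1
  apply Finset.sum_congr rfl
  intro b hb
  rw [Finset.mem_Iio] at hb
  rw [of_mul_of, of_mul_of]
  congr 1
  have hbne1 : b ≠ i' := hb.ne
  have hbne2 : b ≠ i := by
    intro hh; subst hh; exact absurd (lt_trans hb hi'i) (lt_irrefl b)
  have h1 : Equiv.swap ((Equiv.swap i' i) b) ((Equiv.swap i' i) i')
      = (Equiv.swap i' i) * Equiv.swap b i' * (Equiv.swap i' i)⁻¹ :=
    Equiv.swap_apply_apply _ b i'
  rw [Equiv.swap_apply_of_ne_of_ne hbne1 hbne2, Equiv.swap_apply_left, Equiv.swap_inv] at h1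
  exact h1

lemma of_swap_sq (a b : Fin n) : of' (Equiv.swap a b) * of' (Equiv.swap a b) = 1 := by
  rw [of_mul_of, Equiv.swap_mul_self]
  rfl

end JMaux
namespace JMaux

variable {n : ℕ}

/-- exponent at stage `k` -/
def ek (k : ℕ) (σ : Equiv.Perm (Fin n)) : ℕ :=
  (k - σ.support.card) + Multiset.card σ.cycleType

/-- permutations supported on the first `k` points -/
def Sk (n k : ℕ) : Finset (Equiv.Perm (Fin n)) :=
  Finset.univ.filter (fun σ => ∀ x : Fin n, σ x ≠ x → (x : ℕ) < k)

lemma mem_Sk_iff {k : ℕ} {σ : Equiv.Perm (Fin n)} :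
    σ ∈ Sk n k ↔ ∀ x : Fin n, σ x ≠ x → (x : ℕ) < k := by
  simp [Sk]

lemma card_support_le_of_mem_Sk {k : ℕ} {σ : Equiv.Perm (Fin n)} (h : σ ∈ Sk n k) :
    σ.support.card ≤ k := by
  rw [mem_Sk_iff] at h
  calc σ.support.card ≤ (Finset.range k).card := by
        apply Finset.card_le_card_of_injOn Fin.val
        · intro x hx
          rw [Finset.mem_coe, Finset.mem_range]
          exact h x (Equiv.Perm.mem_support.mp hx)
        · intro a _ b _ hab
          exact Fin.ext hab
  _ = k := Finset.card_range k

lemma card_support_lt_of_mem_Sk {k : ℕ} {σ : Equiv.Perm (Fin n)} (h : σ ∈ Sk n k)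
    {j : Fin n} (hj : σ j = j) (hjk : (j : ℕ) < k) :
    σ.support.card + 1 ≤ k := by
  rw [mem_Sk_iff] at h
  have : σ.support.card ≤ ((Finset.range k).erase (j : ℕ)).card := by
    apply Finset.card_le_card_of_injOn Fin.val
    · intro x hx
      have hxmoved := Equiv.Perm.mem_support.mp hx
      rw [Finset.mem_coe, Finset.mem_erase, Finset.mem_range]
      refine ⟨?_, h x hxmoved⟩
      intro hval
      exact hxmoved (by rw [Fin.ext hval]; exact hj)
    · intro a _ b _ hab
      exact Fin.ext hab
  rw [Finset.card_erase_of_mem (Finset.mem_range.mpr hjk), Finset.card_range] at this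
  omega

lemma exp_step_fixed {k : ℕ} {σ : Equiv.Perm (Fin n)} (h : σ ∈ Sk n k) (hk : k ≤ n) :
    ek (k+1) σ = ek k σ + 1 := by
  have := card_support_le_of_mem_Sk h
  unfold ek
  omega

lemma exp_step_moved {k : ℕ} (hkn : k < n) {σ : Equiv.Perm (Fin n)} (h : σ ∈ Sk n k)
    {j : Fin n} (hjk : (j : ℕ) < k) :
    ek (k+1) (σ * Equiv.swap j ⟨k, hkn⟩) = ek k σ := by
  have hσk : σ ⟨k, hkn⟩ = ⟨k, hkn⟩ := by
    by_contra hc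
    have := (mem_Sk_iff.mp h) _ hc
    simp at this
  by_cases hj : σ j = j
  · have hjne : j ≠ ⟨k, hkn⟩ := by
      intro hh
      rw [hh] at hjk
      simp at hjk
    obtain ⟨h1, h2⟩ := stats_mul_swap_fixed hj hσk hjne
    have hb := card_support_lt_of_mem_Sk h hj hjk
    unfold ek
    rw [h1, h2]
    omega
  · obtain ⟨h1, h2⟩ := stats_mul_swap_moved hj hσk
    have hb := card_support_le_of_mem_Sk h
    unfold ek
    rw [h1, h2]
    omega

lemma mem_Sk_mul_swap {k : ℕ} (hkn : k < n) {σ : Equiv.Perm (Fin n)} (h : σ ∈ Sk n k)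
    {j : Fin n} (hjk : (j : ℕ) < k) :
    σ * Equiv.swap j ⟨k, hkn⟩ ∈ Sk n (k + 1) ∧
      (σ * Equiv.swap j ⟨k, hkn⟩) ⟨k, hkn⟩ ≠ ⟨k, hkn⟩ := by
  have hσ := mem_Sk_iff.mp h
  have hσk : σ ⟨k, hkn⟩ = ⟨k, hkn⟩ := by
    by_contra hc
    have := hσ _ hc
    simp at this
  have hjne : j ≠ ⟨k, hkn⟩ := by intro hh; rw [hh] at hjk; simp at hjk
  constructor
  · rw [mem_Sk_iff]
    intro x hx
    by_cases hxj : x = j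
    · subst hxj; exact Nat.lt_succ_of_lt hjk
    · by_cases hxk : x = ⟨k, hkn⟩
      · subst hxk; simp
      · rw [mul_swap_apply_other σ hxj hxk] at hx
        exact Nat.lt_succ_of_lt (hσ x hx)
  · rw [mul_swap_apply_right]
    intro hh
    by_cases hj : σ j = j
    · rw [hj] at hh; exact hjne hh
    · have := hσ j hj
      have hval : ((σ j : Fin n) : ℕ) < k := by
        by_cases hmoved : σ (σ j) = σ j
        · -- σ j could be fixed? no: σ j ∈ supp σ since σ j ≠ j means j ∈ supp, supp closed
          have hjv : σ j ≠ j := hj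
          have : σ (σ j) ≠ σ j := fun hc => hjv (σ.injective hc)
          exact absurd hmoved this
        · exact hσ _ hmoved
      rw [hh] at hval
      simp at hval

lemma mem_Sk_unswap {k : ℕ} (hkn : k < n) {π : Equiv.Perm (Fin n)}
    (h : π ∈ Sk n (k+1)) (hmoves : π ⟨k, hkn⟩ ≠ ⟨k, hkn⟩) :
    ((π⁻¹ ⟨k, hkn⟩ : Fin n) : ℕ) < k ∧
      π * Equiv.swap (π⁻¹ ⟨k, hkn⟩) ⟨k, hkn⟩ ∈ Sk n k := by
  have hπ := mem_Sk_iff.mp h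
  set j' := π⁻¹ ⟨k, hkn⟩ with hj'
  have hπj' : π j' = ⟨k, hkn⟩ := by rw [hj']; simp
  have hj'ne : j' ≠ ⟨k, hkn⟩ := by
    intro hh
    rw [hh] at hπj'
    exact hmoves hπj'
  have hj'moved : π j' ≠ j' := by rw [hπj']; exact Ne.symm hj'ne
  have hj'lt : (j' : ℕ) < k := by
    have := hπ j' hj'moved
    have hne : (j' : ℕ) ≠ k := fun hh => hj'ne (Fin.ext hh)
    omega
  refine ⟨hj'lt, ?_⟩
  rw [mem_Sk_iff]
  intro x hx
  by_cases hxj : x = j'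
  · subst hxj; exact hj'lt
  · by_cases hxk : x = ⟨k, hkn⟩
    · subst hxk
      rw [mul_swap_apply_right, hπj'] at hx
      exact absurd rfl hx
    · rw [mul_swap_apply_other π hxj hxk] at hx
      have := hπ x hx
      have hne : (x : ℕ) ≠ k := fun hh => hxk (Fin.ext hh)
      omega

end JMaux

namespace JMaux

variable {n : ℕ}

local notation "of'" => MonoidAlgebra.of ℂ (Equiv.Perm (Fin n))

lemma Sk_zero : Sk n 0 = {1} := by
  ext σ
  rw [mem_Sk_iff, Finset.mem_singleton]
  constructor
  · intro h
    ext x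
    by_contra hc
    have := h x (by exact fun hh => hc (by rw [hh]; rfl))
    omega
  · intro h x hx
    subst h
    simp at hx

lemma Sk_filter_fixed {k : ℕ} (hkn : k < n) :
    (Sk n (k+1)).filter (fun π => π ⟨k, hkn⟩ = ⟨k, hkn⟩) = Sk n k := by
  ext σ
  rw [Finset.mem_filter, mem_Sk_iff, mem_Sk_iff]
  constructor
  · rintro ⟨h1, h2⟩ x hx
    have := h1 x hx
    have hne : (x : ℕ) ≠ k := by
      intro hh
      have : x = ⟨k, hkn⟩ := Fin.ext hh
      subst this
      exact hx h2
    omega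
  · intro h
    refine ⟨fun x hx => Nat.lt_succ_of_lt (h x hx), ?_⟩
    by_contra hc
    have := h _ hc
    simp at this

lemma take_prod (z : ℂ) (k : ℕ) (hk : k ≤ n) :
    ((List.ofFn (fun i : Fin n =>
        algebraMap ℂ (MonoidAlgebra ℂ (Equiv.Perm (Fin n))) z + JM n i)).take k).prod
      = ∑ σ ∈ Sk n k, z ^ ek k σ • of' σ := by
  induction k with
  | zero =>
    rw [List.take_zero, List.prod_nil, Sk_zero, Finset.sum_singleton]
    have h1 : ek (n := n) 0 1 = 0 := by
      unfold ek
      simp [Equiv.Perm.cycleType_one]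
    rw [h1, pow_zero, one_smul, map_one]
  | succ k ih =>
    have hkn : k < n := hk
    have hlen : k < (List.ofFn (fun i : Fin n =>
        algebraMap ℂ (MonoidAlgebra ℂ (Equiv.Perm (Fin n))) z + JM n i)).length := by
      rw [List.length_ofFn]; exact hkn
    rw [List.prod_take_succ _ k hlen, ih (le_of_lt hkn)]
    have hget : (List.ofFn (fun i : Fin n =>
        algebraMap ℂ (MonoidAlgebra ℂ (Equiv.Perm (Fin n))) z + JM n i))[k] =
        algebraMap ℂ (MonoidAlgebra ℂ (Equiv.Perm (Fin n))) z + JM n ⟨k, hkn⟩ := by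
      simp [List.getElem_ofFn]
    rw [hget, mul_add]
    -- part A : scalar part
    have hA : (∑ σ ∈ Sk n k, z ^ ek k σ • of' σ) *
        algebraMap ℂ (MonoidAlgebra ℂ (Equiv.Perm (Fin n))) z
        = ∑ σ ∈ Sk n k, z ^ ek (k+1) σ • of' σ := by
      rw [Finset.sum_mul]
      apply Finset.sum_congr rfl
      intro σ hσ
      rw [smul_mul_assoc, ← Algebra.commutes z (of' σ), ← Algebra.smul_def, smul_smul,
        ← pow_succ, exp_step_fixed hσ (le_of_lt hkn)]
    -- part B : JM part
    have hB : (∑ σ ∈ Sk n k, z ^ ek k σ • of' σ) * JM n ⟨k, hkn⟩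
        = ∑ π ∈ (Sk n (k+1)).filter (fun π => ¬ π ⟨k, hkn⟩ = ⟨k, hkn⟩),
            z ^ ek (k+1) π • of' π := by
      unfold JM
      rw [Finset.sum_mul]
      have hstep : ∀ σ ∈ Sk n k, (z ^ ek k σ • of' σ) *
          (∑ j ∈ Finset.Iio (⟨k, hkn⟩ : Fin n), of' (Equiv.swap j ⟨k, hkn⟩))
          = ∑ j ∈ Finset.Iio (⟨k, hkn⟩ : Fin n), z ^ ek k σ • of' (σ * Equiv.swap j ⟨k, hkn⟩) := by
        intro σ _
        rw [Finset.mul_sum]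
        apply Finset.sum_congr rfl
        intro j _
        rw [smul_mul_assoc, of_mul_of]
      rw [Finset.sum_congr rfl hstep, ← Finset.sum_product']
      refine Finset.sum_nbij' (fun p => p.1 * Equiv.swap p.2 ⟨k, hkn⟩)
        (fun π => (π * Equiv.swap (π⁻¹ ⟨k, hkn⟩) ⟨k, hkn⟩, π⁻¹ ⟨k, hkn⟩)) ?_ ?_ ?_ ?_ ?_
      · rintro ⟨σ, j⟩ hp
        rw [Finset.mem_product, Finset.mem_Iio] at hp
        obtain ⟨h1, h2⟩ := hp
        have h2' : (j : ℕ) < k := h2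
        obtain ⟨hmem, hmoves⟩ := mem_Sk_mul_swap hkn h1 h2'
        rw [Finset.mem_filter]
        exact ⟨hmem, hmoves⟩
      · intro π hπ
        rw [Finset.mem_filter] at hπ
        obtain ⟨h1, h2⟩ := hπ
        obtain ⟨hlt, hmem⟩ := mem_Sk_unswap hkn h1 h2
        rw [Finset.mem_product, Finset.mem_Iio]
        exact ⟨hmem, hlt⟩
      · rintro ⟨σ, j⟩ hp
        rw [Finset.mem_product, Finset.mem_Iio] at hp
        obtain ⟨h1, h2⟩ := hp
        have hσk : σ ⟨k, hkn⟩ = ⟨k, hkn⟩ := by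
          by_contra hc
          have := (mem_Sk_iff.mp h1) _ hc
          simp at this
        have hinv : (σ * Equiv.swap j ⟨k, hkn⟩)⁻¹ ⟨k, hkn⟩ = j := by
          rw [Equiv.Perm.inv_eq_iff_eq, mul_swap_apply_left, hσk]
        simp only [hinv]
        rw [Prod.mk.injEq]
        refine ⟨?_, rfl⟩
        rw [mul_assoc]
        simp [Equiv.swap_mul_self]
      · intro π hπ
        simp only
        rw [mul_assoc]
        simp [Equiv.swap_mul_self]
      · rintro ⟨σ, j⟩ hp
        rw [Finset.mem_product, Finset.mem_Iio] at hp
        obtain ⟨h1, h2⟩ := hp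
        have h2' : (j : ℕ) < k := h2
        rw [exp_step_moved hkn h1 h2']
    rw [hA, hB]
    rw [← Finset.sum_filter_add_sum_filter_not (Sk n (k+1))
      (fun π => π ⟨k, hkn⟩ = ⟨k, hkn⟩), Sk_filter_fixed hkn]

lemma Sk_top : Sk n n = Finset.univ := by
  ext σ
  simp only [Finset.mem_univ, iff_true, mem_Sk_iff]
  intro x _
  exact x.isLt

lemma full_prod (z : ℂ) :
    (List.ofFn (fun i : Fin n =>
        algebraMap ℂ (MonoidAlgebra ℂ (Equiv.Perm (Fin n))) z + JM n i)).prod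
      = ∑ σ : Equiv.Perm (Fin n), z ^ cycleCount σ • of' σ := by
  have := take_prod (n := n) z n le_rfl
  rw [← List.take_length (l := (List.ofFn (fun i : Fin n =>
      algebraMap ℂ (MonoidAlgebra ℂ (Equiv.Perm (Fin n))) z + JM n i)))]
  rw [List.length_ofFn, this, Sk_top]
  rfl

end JMaux
namespace JMaux

variable {n : ℕ}

local notation "SA" => MonoidAlgebra ℂ (Equiv.Perm (Fin n))

noncomputable instance : Module.Finite ℂ (MonoidAlgebra ℂ (Equiv.Perm (Fin n))) :=
  inferInstance

/-- `c` is an eigenvalue of left multiplication by `a`. -/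
def HasEig (a : MonoidAlgebra ℂ (Equiv.Perm (Fin n))) (c : ℂ) : Prop :=
  ∃ w : MonoidAlgebra ℂ (Equiv.Perm (Fin n)), w ≠ 0 ∧ a * w = c • w

lemma JM_eig_int : ∀ v : ℕ, ∀ i : Fin n, (i : ℕ) = v → ∀ c : ℂ, HasEig (JM n i) c →
    ∃ m : ℤ, c = (m : ℂ) ∧ m.natAbs ≤ v := by
  intro v
  induction v with
  | zero =>
    intro i hi c ⟨w, hw, hww⟩
    have hIio : Finset.Iio i = ∅ := by
      ext b
      simp only [Finset.mem_Iio, Finset.notMem_empty, iff_false, Fin.lt_def]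
      omega
    have hJM : JM n i = 0 := by rw [JM, hIio, Finset.sum_empty]
    rw [hJM, zero_mul] at hww
    have := (smul_eq_zero.mp hww.symm).resolve_right hw
    exact ⟨0, by simp [this], by simp⟩
  | succ v ih =>
    intro i hi c ⟨w, hw, hww⟩
    have hvn : v < n := by omega
    set i' : Fin n := ⟨v, hvn⟩ with hi'def
    have hrel := JM_rec (n := n) i i' (by simp only [hi'def, Fin.val_mk]; omega)
    set os := MonoidAlgebra.of ℂ (Equiv.Perm (Fin n)) (Equiv.swap i' i) with hosdef
    have hos2 : os * os = 1 := of_swap_sq i' i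
    -- common eigenvector
    set Y : Module.End ℂ SA := LinearMap.mulLeft ℂ (JM n i) with hYdef
    set X : Module.End ℂ SA := LinearMap.mulLeft ℂ (JM n i') with hXdef
    set U : Submodule ℂ SA := Y.eigenspace c with hUdef
    have hwU : w ∈ U := by
      rw [hUdef, Module.End.mem_eigenspace_iff, hYdef, LinearMap.mulLeft_apply]
      exact hww
    have hmaps : ∀ u ∈ U, X u ∈ U := by
      intro u hu
      rw [hUdef, Module.End.mem_eigenspace_iff, hYdef, LinearMap.mulLeft_apply] at hu ⊢
      rw [hXdef, LinearMap.mulLeft_apply]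
      calc JM n i * (JM n i' * u) = JM n i' * (JM n i * u) := by
            rw [← mul_assoc, ← (JM_comm i' i).eq, mul_assoc]
      _ = c • (JM n i' * u) := by rw [hu, mul_smul_comm]
    have hUnt : Nontrivial U :=
      Submodule.nontrivial_iff_ne_bot.mpr (fun hbot => hw (by
        have := hbot ▸ hwU
        simpa using this))
    have hUfd : FiniteDimensional ℂ U := inferInstance
    obtain ⟨a, ha⟩ := Module.End.exists_eigenvalue
      (X.restrict (fun u hu => hmaps u hu) : Module.End ℂ U)
    obtain ⟨v0, hv0⟩ := ha.exists_hasEigenvector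
    set u : SA := (v0 : SA) with hudef
    have hu0 : u ≠ 0 := fun h => hv0.2 (Submodule.coe_eq_zero.mp (hudef.symm.trans h))
    have hxu : JM n i' * u = a • u := by
      have := hv0.apply_eq_smul
      have h2 : (X (v0 : SA) : SA) = a • (v0 : SA) := by
        rw [← LinearMap.restrict_coe_apply X (fun u hu => hmaps u hu) v0, this]
        simp
      rw [hXdef, LinearMap.mulLeft_apply] at h2
      exact h2
    have hyu : JM n i * u = c • u := by
      have hmem : (v0 : MonoidAlgebra ℂ (Equiv.Perm (Fin n))) ∈ Y.eigenspace c := v0.2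
      rw [Module.End.mem_eigenspace_iff] at hmem
      simpa [hYdef, hudef, LinearMap.mulLeft_apply] using hmem
    -- key algebraic computation : JM i' * (os * u) = c • (os * u) - u
    have hxos : JM n i' * (os * u) = c • (os * u) - u := by
      have h1 : os * JM n i = JM n i' * os + 1 := by
        rw [hrel, mul_add]
        have : os * (os * JM n i' * os) = JM n i' * os := by
          rw [show os * (os * JM n i' * os) = (os * os) * (JM n i' * os) by noncomm_ring, hos2,
            one_mul]
        rw [this, hos2]
      have h2 : (JM n i' * os + 1) * u = os * (JM n i * u) := by
        rw [← h1, mul_assoc]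
      rw [hyu, mul_smul_comm] at h2
      have h3 : JM n i' * (os * u) = os * JM n i * u - u := by
        rw [h1, add_mul, one_mul, mul_assoc]
        abel
      rw [h3, mul_assoc, hyu, mul_smul_comm]
    by_cases hac : a = c
    · obtain ⟨m, hm1, hm2⟩ := ih i' rfl a ⟨u, hu0, hxu⟩
      exact ⟨m, by rw [← hac, hm1], by omega⟩
    · set d : ℂ := (a - c)⁻¹ with hddef
      have hacne : a - c ≠ 0 := sub_ne_zero.mpr hac
      set w' : SA := os * u + d • u with hw'def
      have hsc : d * a - 1 = c * d := by
        rw [hddef]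
        field_simp
        ring
      have hXw' : JM n i' * w' = c • w' := by
        rw [hw'def, mul_add, hxos, mul_smul_comm, hxu, smul_smul, smul_add, smul_smul,
          ← hsc, sub_smul, one_smul]
        abel
      by_cases hw'0 : w' = 0
      · -- os * u = t • u with t = -d
        have hosu : os * u = (-d) • u := by
          have := hw'0
          rw [hw'def] at this
          have h4 : os * u = -(d • u) := by linear_combination (norm := noncomm_ring) this
          rw [h4, neg_smul]
        set t : ℂ := -d with htdef
        have ht2 : t ^ 2 = 1 := by
          have h5 : u = (t * t) • u := by
            calc u = (os * os) * u := by rw [hos2, one_mul]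
            _ = os * (os * u) := by rw [mul_assoc]
            _ = os * (t • u) := by rw [hosu, htdef]
            _ = t • (os * u) := by rw [mul_smul_comm]
            _ = t • (t • u) := by rw [hosu, htdef]
            _ = (t * t) • u := by rw [smul_smul]
          have h6 : (t * t - 1) • u = 0 := by
            rw [sub_smul, one_smul, ← h5, sub_self]
          have := (smul_eq_zero.mp h6).resolve_right hu0
          rw [sq]; exact sub_eq_zero.mp this
        have hcat : c = a + t := by
          have e1 : os * JM n i' * os * u = a • u := by
            rw [mul_assoc, mul_assoc, hosu, mul_smul_comm, hxu, smul_smul, mul_smul_comm,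
              hosu, smul_smul]
            congr 1
            linear_combination a * ht2
          have h8 : JM n i * u = (a + t) • u := by
            rw [hrel, add_mul, e1, hosu, ← add_smul]
          rw [hyu] at h8
          have h9 : (c - (a + t)) • u = 0 := by rw [sub_smul, h8, sub_self]
          have := (smul_eq_zero.mp h9).resolve_right hu0
          linear_combination sub_eq_zero.mp this
        have htpm : t = 1 ∨ t = -1 := by
          have : (t - 1) * (t + 1) = 0 := by linear_combination ht2
          rcases mul_eq_zero.mp this with h | h
          · left; exact sub_eq_zero.mp h
          · right; linear_combination h
        obtain ⟨m, hm1, hm2⟩ := ih i' rfl a ⟨u, hu0, hxu⟩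
        rcases htpm with h | h
        · refine ⟨m + 1, ?_, by omega⟩
          rw [hcat, hm1, h]; push_cast; ring
        · refine ⟨m - 1, ?_, by omega⟩
          rw [hcat, hm1, h]; push_cast; ring
      · obtain ⟨m, hm1, hm2⟩ := ih i' rfl c ⟨w', hw'0, hXw'⟩
        exact ⟨m, hm1, by omega⟩

end JMaux
namespace JMaux

variable {n : ℕ}

local notation "SA" => MonoidAlgebra ℂ (Equiv.Perm (Fin n))

lemma isUnit_of_mulLeft_injective (a : SA)
    (h : Function.Injective fun w : SA => a * w) : IsUnit a := by
  have hinj : Function.Injective (LinearMap.mulLeft ℂ a) := h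
  have hsurj := (LinearMap.injective_iff_surjective (f := LinearMap.mulLeft ℂ a)).mp hinj
  obtain ⟨b, hb⟩ := hsurj 1
  rw [LinearMap.mulLeft_apply] at hb
  have hba : b * a = 1 := by
    apply h
    show a * (b * a) = a * 1
    rw [← mul_assoc, hb, one_mul, mul_one]
  exact ⟨⟨a, b, hb, hba⟩, rfl⟩

lemma factor_unit (z : ℂ)
    (hz : ∀ k : ℤ, 1 - (n : ℤ) ≤ k → k ≤ (n : ℤ) - 1 → z ≠ (k : ℂ)) (i : Fin n) :
    IsUnit (algebraMap ℂ SA z + JM n i) := by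
  apply isUnit_of_mulLeft_injective
  have hker : ∀ w : SA, (algebraMap ℂ SA z + JM n i) * w = 0 → w = 0 := by
    intro w hw
    by_contra hw0
    have heig : JM n i * w = (-z) • w := by
      rw [add_mul] at hw
      have : JM n i * w = -(algebraMap ℂ SA z * w) := by
        rw [eq_neg_iff_add_eq_zero, add_comm]
        exact hw
      rw [this, ← Algebra.smul_def, ← neg_smul]
    obtain ⟨m, hm1, hm2⟩ := JM_eig_int (i : ℕ) i rfl (-z) ⟨w, hw0, heig⟩
    have hzm : z = ((-m : ℤ) : ℂ) := by
      push_cast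
      linear_combination -hm1
    have hbound : (i : ℕ) < n := i.isLt
    refine hz (-m) (by omega) (by omega) hzm
  intro w1 w2 hww
  have h0 : (algebraMap ℂ SA z + JM n i) * (w1 - w2) = 0 := by
    rw [mul_sub]
    simpa using sub_eq_zero.mpr hww
  exact sub_eq_zero.mp (hker _ h0)

lemma commute_factor (z : ℂ) (i j : Fin n) :
    Commute (algebraMap ℂ SA z + JM n i) (algebraMap ℂ SA z + JM n j) := by
  apply Commute.add_right
  · apply Commute.add_left
    · exact Commute.refl _
    · exact (Algebra.commutes z (JM n i)).symm
  · apply Commute.add_left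
    · exact Algebra.commutes z (JM n j)
    · exact JM_comm i j

lemma ring_inverse_prod : ∀ l : List SA, (∀ x ∈ l, IsUnit x) → l.Pairwise Commute →
    IsUnit l.prod ∧ Ring.inverse l.prod = (l.map Ring.inverse).prod := by
  intro l
  induction l with
  | nil =>
    intro _ _
    simp
  | cons a l ih =>
    intro hu hp
    obtain ⟨hul, hinvl⟩ := ih (fun x hx => hu x (List.mem_cons_of_mem a hx)) hp.of_cons
    have hua : IsUnit a := hu a List.mem_cons_self
    have hcomm : Commute a l.prod :=
      Commute.list_prod_right _ _ (fun x hx => (List.pairwise_cons.mp hp).1 x hx)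
    rw [List.prod_cons, List.map_cons, List.prod_cons]
    refine ⟨hua.mul hul, ?_⟩
    rw [Ring.mul_inverse_rev' hcomm, ← (hcomm.ringInverse_ringInverse).eq, hinvl]

end JMaux

/-- For `n ≥ 1` and `z ∈ ℂ` avoiding `{1-n, …, n-1}`, each `z + J_i`
is invertible in `ℂ[S_n]`, `Ω_{n,z}` is invertible, and
`Ω_{n,z}⁻¹ = (z + J_1)⁻¹(z + J_2)⁻¹ ⋯ (z + J_n)⁻¹`. -/
theorem omega_inverse_eq_product_of_JM_inverses (n : ℕ) (hn : 1 ≤ n) (z : ℂ)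
    (hz : ∀ k : ℤ, 1 - (n : ℤ) ≤ k → k ≤ (n : ℤ) - 1 → z ≠ (k : ℂ)) :
    (∀ i : Fin n,
      IsUnit (algebraMap ℂ (MonoidAlgebra ℂ (Equiv.Perm (Fin n))) z + JM n i)) ∧
    IsUnit (Omega n z) ∧
    Ring.inverse (Omega n z) =
      (List.ofFn (fun i : Fin n =>
        Ring.inverse (algebraMap ℂ (MonoidAlgebra ℂ (Equiv.Perm (Fin n))) z + JM n i))).prod := by
  classical
  set l := List.ofFn (fun i : Fin n =>
    algebraMap ℂ (MonoidAlgebra ℂ (Equiv.Perm (Fin n))) z + JM n i) with hl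
  have hfac : ∀ i : Fin n,
      IsUnit (algebraMap ℂ (MonoidAlgebra ℂ (Equiv.Perm (Fin n))) z + JM n i) :=
    fun i => JMaux.factor_unit z hz i
  have hall : ∀ x ∈ l, IsUnit x := by
    intro x hx
    rw [hl, List.mem_ofFn] at hx
    obtain ⟨i, rfl⟩ := hx
    exact hfac i
  have hpair : l.Pairwise Commute := by
    rw [hl, List.pairwise_ofFn]
    intro i j _
    exact JMaux.commute_factor z i j
  have hOm : Omega n z = l.prod := by
    rw [hl, JMaux.full_prod z]
    rfl
  obtain ⟨hu, hinv⟩ := JMaux.ring_inverse_prod l hall hpair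
  refine ⟨hfac, by rw [hOm]; exact hu, ?_⟩
  rw [hOm, hinv, hl, List.map_ofFn]
  rfl
end

section
/- Let n ≥ 1 and r ≥ 0. In ℂ[S_n], the r-th complete homogeneous symmetric polynomial of the Jucys–Murphy elements equals the sum of products of all weakly monotone r-tuples of transpositions: ∑_{1 ≤ i_1 ≤ i_2 ≤ ⋯ ≤ i_r ≤ n} J_{i_1} J_{i_2} ⋯ J_{i_r} = ∑ τ_1 τ_2 ⋯ τ_r, where the right-hand sum runs over all tuples (τ_1,…,τ_r) of transpositions of [n] that are weakly monotone. -/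
section Aux

open Finset

lemma top_lt_of_pos {n : ℕ} (hn : 1 ≤ n) (τ : Equiv.Perm (Fin n)) : top τ < n :=
  (Finset.sup_lt_iff (show (⊥ : ℕ) < n from hn)).2 fun b _ => b.isLt

lemma top_swap' {n : ℕ} {a b : Fin n} (h : a ≠ b) :
    top (Equiv.swap a b) = max a.val b.val := by
  rw [top, Equiv.Perm.support_swap h]
  simp [Finset.sup_insert, Finset.sup_singleton]

/-- The set of transpositions with top `i`. -/
noncomputable def Tset {n : ℕ} (i : Fin n) : Finset (Equiv.Perm (Fin n)) :=
  (Finset.Iio i).image (fun j => Equiv.swap j i)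

lemma JM_eq_sum_Tset {n : ℕ} (i : Fin n) :
    JM n i = ∑ τ ∈ Tset i, MonoidAlgebra.of ℂ (Equiv.Perm (Fin n)) τ := by
  rw [Tset, Finset.sum_image]
  · rfl
  · intro j _ j' _ h
    have h2 := congrArg (fun e : Equiv.Perm (Fin n) => e i) h
    simpa [Equiv.swap_apply_right] using h2

lemma mem_Tset {n : ℕ} {i : Fin n} {τ : Equiv.Perm (Fin n)} :
    τ ∈ Tset i ↔ τ.IsSwap ∧ top τ = i.val := by
  constructor
  · intro hT
    simp only [Tset, Finset.mem_image, Finset.mem_Iio] at hT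
    obtain ⟨j, hj, rfl⟩ := hT
    have hne : j ≠ i := ne_of_lt hj
    refine ⟨⟨j, i, hne, rfl⟩, ?_⟩
    rw [top_swap' hne]
    exact max_eq_right (le_of_lt hj)
  · rintro ⟨⟨a, b, hab, rfl⟩, htop⟩
    rw [top_swap' hab] at htop
    simp only [Tset, Finset.mem_image, Finset.mem_Iio]
    rcases lt_or_gt_of_ne hab with h | h
    · have hb : b = i := Fin.ext (by have := Fin.lt_def.mp h; rw [← htop]; omega)
      subst hb
      exact ⟨a, h, rfl⟩
    · have ha : a = i := Fin.ext (by have := Fin.lt_def.mp h; rw [← htop]; omega)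
      subst ha
      exact ⟨b, h, Equiv.swap_comm _ _⟩

lemma sum_piFinset_succ {r : ℕ} {β M : Type*} [AddCommMonoid M] [DecidableEq β]
    (S : Fin (r + 1) → Finset β) (P : (Fin (r + 1) → β) → M) :
    ∑ f ∈ Fintype.piFinset S, P f =
      ∑ x ∈ S 0, ∑ t ∈ Fintype.piFinset (Fin.tail S), P (Fin.cons x t) := by
  rw [← Finset.sum_product']
  refine Finset.sum_nbij' (fun f => (f 0, Fin.tail f)) (fun p => Fin.cons p.1 p.2)
    ?_ ?_ ?_ ?_ ?_
  · intro f hf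
    rw [Fin.mem_piFinset_iff_zero_tail] at hf
    simpa [Finset.mem_product] using hf
  · intro p hp
    rw [Finset.mem_product] at hp
    rw [Fin.mem_piFinset_iff_zero_tail]
    simpa [Fin.tail_cons, Fin.cons_zero] using hp
  · intro f _
    exact Fin.cons_self_tail f
  · intro p _
    simp [Fin.tail_cons, Fin.cons_zero]
  · intro f _
    rw [Fin.cons_self_tail f]

lemma prod_ofFn_sum {M β : Type*} [Semiring M] [DecidableEq β] :
    ∀ (r : ℕ) (S : Fin r → Finset β) (a : β → M),
      (List.ofFn fun k => ∑ x ∈ S k, a x).prod =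
        ∑ f ∈ Fintype.piFinset S, (List.ofFn fun k => a (f k)).prod
  | 0, S, a => by
    have huniv : Fintype.piFinset S = Finset.univ :=
      Finset.eq_univ_of_forall fun f => Fintype.mem_piFinset.mpr fun i => i.elim0
    rw [huniv, Finset.univ_unique, Finset.sum_singleton]
    simp
  | (r + 1), S, a => by
    rw [List.ofFn_succ, List.prod_cons, prod_ofFn_sum r (fun i => S i.succ) a,
      sum_piFinset_succ S, Finset.sum_mul_sum]
    refine Finset.sum_congr rfl fun x _ => Finset.sum_congr rfl fun t _ => ?_
    rw [List.ofFn_succ, List.prod_cons]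
    simp [Fin.cons_zero, Fin.cons_succ]

end Aux

open scoped Classical in
/-- For `n ≥ 1` and `r ≥ 0`, the `r`-th complete homogeneous symmetric
polynomial in the Jucys–Murphy elements, `∑_{i_1≤⋯≤i_r} J_{i_1}⋯J_{i_r}`, equals the
sum over all weakly monotone `r`-tuples of transpositions of their products. -/
theorem complete_homogeneous_JM_eq_weakly_monotone_sum (n r : ℕ) (hn : 1 ≤ n) :
    ∑ g ∈ Finset.univ.filter (fun g : Fin r → Fin n => Monotone g),
        (List.ofFn (fun k : Fin r => JM n (g k))).prod =
    ∑ f ∈ Finset.univ.filter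
        (fun f : Fin r → Equiv.Perm (Fin n) => WeaklyMonotoneTuple f),
        MonoidAlgebra.of ℂ (Equiv.Perm (Fin n)) (tupleProd f) := by
  classical
  have htop : ∀ τ : Equiv.Perm (Fin n), top τ < n := top_lt_of_pos hn
  set G : (Fin r → Equiv.Perm (Fin n)) → (Fin r → Fin n) :=
    fun f k => ⟨top (f k), htop _⟩ with hG
  have step1 : ∀ g : Fin r → Fin n,
      (List.ofFn fun k => JM n (g k)).prod =
        ∑ f ∈ Fintype.piFinset (fun k => Tset (g k)),
          MonoidAlgebra.of ℂ (Equiv.Perm (Fin n)) (tupleProd f) := by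
    intro g
    have h1 : (List.ofFn fun k => JM n (g k)).prod =
        (List.ofFn fun k => ∑ τ ∈ Tset (g k),
          MonoidAlgebra.of ℂ (Equiv.Perm (Fin n)) τ).prod := by
      simp only [JM_eq_sum_Tset]
    rw [h1, prod_ofFn_sum r (fun k => Tset (g k))
      (fun τ => MonoidAlgebra.of ℂ (Equiv.Perm (Fin n)) τ)]
    refine Finset.sum_congr rfl fun f _ => ?_
    rw [tupleProd,
      show (List.ofFn fun k => (MonoidAlgebra.of ℂ (Equiv.Perm (Fin n))) (f k)) =
        (List.ofFn f).map (MonoidAlgebra.of ℂ (Equiv.Perm (Fin n))) from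
        (List.map_ofFn).symm]
    exact (map_list_prod _ _).symm
  have step2 : ∀ g : Fin r → Fin n, Monotone g →
      Fintype.piFinset (fun k => Tset (g k)) =
        (Finset.univ.filter
          (fun f : Fin r → Equiv.Perm (Fin n) => WeaklyMonotoneTuple f)).filter
            (fun f => G f = g) := by
    intro g hg
    ext f
    simp only [Fintype.mem_piFinset, Finset.mem_filter, Finset.mem_univ, true_and,
      mem_Tset]
    constructor
    · intro h
      refine ⟨⟨fun k => (h k).1, fun i j hij => ?_⟩, ?_⟩
      · rw [(h i).2, (h j).2]
        exact hg hij
      · funext k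
        exact Fin.ext ((h k).2)
    · rintro ⟨⟨hswap, _⟩, hGf⟩ k
      exact ⟨hswap k, congrArg Fin.val (congrFun hGf k)⟩
  rw [Finset.sum_congr rfl
    (fun g hg => by rw [step1 g, step2 g (Finset.mem_filter.mp hg).2])]
  refine Finset.sum_fiberwise_of_maps_to (fun f hf => ?_) _
  have hf' := (Finset.mem_filter.mp hf).2
  exact Finset.mem_filter.mpr
    ⟨Finset.mem_univ _, fun i j hij => Fin.mk_le_mk.mpr (hf'.2 i j hij)⟩
end

section
/- Let n ≥ 1. For every permutation σ ∈ S_n there is exactly one strictly monotone tuple (τ_1,…,τ_r) of transpositions of [n] such that τ_1 τ_2 ⋯ τ_r = σ, and its length is r = n − #σ. Consequently, for every strictly monotone r-tuple of transpositions, the product τ_1 τ_2 ⋯ τ_r has exactly n − r cycles. -/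
section Aux

open Equiv Equiv.Perm Finset

/-- Insertion: multiplying a cycle by a swap attaching a new point keeps it a cycle. -/
theorem insert_isCycle {α : Type*} [DecidableEq α] [Fintype α] {γ : Perm α} {a b : α}
    (hγ : γ.IsCycle) (ha : a ∈ γ.support) (hb : b ∉ γ.support) :
    (γ * Equiv.swap a b).IsCycle ∧ (γ * Equiv.swap a b).support = insert b γ.support := by
  have hab : a ≠ b := fun h => hb (h ▸ ha)
  have hγb : γ b = b := notMem_support.mp hb
  set g := γ * Equiv.swap a b with hg
  have hgapp : ∀ x, g x = γ (Equiv.swap a b x) := fun x => rfl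
  have hga : g a = b := by rw [hgapp, Equiv.swap_apply_left, hγb]
  have hgb : g b = γ a := by rw [hgapp, Equiv.swap_apply_right]
  have hgx : ∀ x, x ≠ a → x ≠ b → g x = γ x := by
    intro x hxa hxb; rw [hgapp, Equiv.swap_apply_of_ne_of_ne hxa hxb]
  have hγa_mem : γ a ∈ γ.support := apply_mem_support.mpr ha
  have hsupp : g.support = insert b γ.support := by
    ext x
    rcases eq_or_ne x a with h | hxa
    · have h1 : γ a ≠ a := mem_support.mp ha
      have h2 : a ≠ b := hab
      subst h
      simp only [mem_support, hga, mem_insert]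
      tauto
    rcases eq_or_ne x b with h | hxb
    · have h1 : γ a ≠ b := fun h => hb (h ▸ hγa_mem)
      subst h
      simp only [mem_support, hgb, mem_insert]
      tauto
    · simp only [mem_support, hgx x hxa hxb, mem_insert]
      tauto
  refine ⟨?_, hsupp⟩
  have key : ∀ k : ℕ, ∃ m : ℕ, (g ^ m) a = (γ ^ k) a := by
    intro k
    induction k with
    | zero => exact ⟨0, rfl⟩
    | succ k ih =>
      obtain ⟨m, hm⟩ := ih
      have hy_mem : (γ ^ k) a ∈ γ.support := pow_apply_mem_support.mpr ha
      have hstep : (γ ^ (k+1)) a = γ ((γ ^ k) a) := by rw [pow_succ']; rfl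
      rcases eq_or_ne ((γ ^ k) a) a with hya | hya
      · refine ⟨2, ?_⟩
        have h2 : (g ^ 2) a = g (g a) := by rw [pow_two]; rfl
        rw [h2, hstep, hya, hga, hgb]
      · have hyb : (γ ^ k) a ≠ b := fun h => hb (h ▸ hy_mem)
        refine ⟨m + 1, ?_⟩
        have h1 : (g ^ (m+1)) a = g ((g ^ m) a) := by rw [pow_succ']; rfl
        rw [h1, hm, hstep, hgx _ hya hyb]
  refine ⟨a, by rw [hga]; exact hab.symm, ?_⟩
  intro y hy
  have hymem : y ∈ g.support := mem_support.mpr hy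
  rw [hsupp, mem_insert] at hymem
  rcases hymem with rfl | hymem
  · exact ⟨1, by simpa using hga⟩
  · have : γ.SameCycle a y := hγ.sameCycle (mem_support.mp ha) (mem_support.mp hymem)
    obtain ⟨k, _, hk⟩ := this.exists_pow_eq'
    obtain ⟨m, hm⟩ := key k
    exact ⟨m, by rw [zpow_natCast, hm, hk]⟩

theorem cycleCount_one {n : ℕ} : cycleCount (1 : Equiv.Perm (Fin n)) = n := by
  simp [cycleCount, Equiv.Perm.cycleType_one]

theorem cycleCount_mul_swap {n : ℕ} {σ : Equiv.Perm (Fin n)} {a b : Fin n}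
    (hab : a ≠ b) (hb : b ∉ σ.support) :
    cycleCount (σ * Equiv.swap a b) + 1 = cycleCount σ := by
  have hσb : σ b = b := Equiv.Perm.notMem_support.mp hb
  have hcard_le : ∀ τ : Equiv.Perm (Fin n), τ.support.card ≤ n := by
    intro τ
    simpa using Finset.card_le_card (Finset.subset_univ τ.support)
  by_cases ha : a ∈ σ.support
  · -- a is moved: b joins a's cycle
    have haa : σ a ≠ a := Equiv.Perm.mem_support.mp ha
    set γ := σ.cycleOf a with hγdef
    have hγcyc : γ.IsCycle := Equiv.Perm.isCycle_cycleOf σ haa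
    have hsuppγ : γ.support ⊆ σ.support := Equiv.Perm.support_cycleOf_le σ a
    have haγ : a ∈ γ.support := by
      rw [Equiv.Perm.mem_support, hγdef, Equiv.Perm.cycleOf_apply_self]; exact haa
    have hbγ : b ∉ γ.support := fun h => hb (hsuppγ h)
    set ρ := σ * γ⁻¹ with hρdef
    have hρ1 : ∀ x ∈ γ.support, ρ x = x := by
      intro x hx
      have hsc : σ.SameCycle a x := (Equiv.Perm.mem_support_cycleOf_iff.mp hx).1
      have hinv : γ⁻¹ x = σ⁻¹ x := by
        rw [hγdef, Equiv.Perm.cycleOf_inv, Equiv.Perm.cycleOf_apply,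
          if_pos ((Equiv.Perm.sameCycle_inv).mpr hsc)]
      show σ (γ⁻¹ x) = x
      rw [hinv]; exact Equiv.apply_symm_apply σ x
    have hρ2 : ∀ x ∉ γ.support, ρ x = σ x := by
      intro x hx
      have : γ⁻¹ x = x := by
        rw [← Equiv.Perm.support_inv] at hx
        exact Equiv.Perm.notMem_support.mp hx
      show σ (γ⁻¹ x) = σ x
      rw [this]
    have hdisj : γ.Disjoint ρ := by
      intro x
      by_cases hx : x ∈ γ.support
      · exact Or.inr (hρ1 x hx)
      · exact Or.inl (Equiv.Perm.notMem_support.mp hx)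
    have hγρ : γ * ρ = σ := by
      rw [hdisj.commute.eq, hρdef, inv_mul_cancel_right]
    have hsuppρ : ρ.support = σ.support \ γ.support := by
      ext x
      constructor
      · intro hxρ
        have hxγ : x ∉ γ.support := fun h => (Equiv.Perm.mem_support.mp hxρ) (hρ1 x h)
        refine Finset.mem_sdiff.mpr ⟨?_, hxγ⟩
        rw [Equiv.Perm.mem_support, ← hρ2 x hxγ]
        exact Equiv.Perm.mem_support.mp hxρ
      · intro hxs
        obtain ⟨h1, h2⟩ := Finset.mem_sdiff.mp hxs
        rw [Equiv.Perm.mem_support, hρ2 x h2]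
        exact Equiv.Perm.mem_support.mp h1
    have haρ : a ∉ ρ.support := by rw [hsuppρ]; simp [haγ]
    have hbρ : b ∉ ρ.support := by rw [hsuppρ]; simp [hb]
    obtain ⟨hγ'cyc, hγ'supp⟩ := insert_isCycle hγcyc haγ hbγ
    set γ' := γ * Equiv.swap a b with hγ'def
    have hdisjswap : ρ.Disjoint (Equiv.swap a b) := by
      intro x
      by_cases hx : x = a ∨ x = b
      · rcases hx with rfl | rfl
        · exact Or.inl (Equiv.Perm.notMem_support.mp haρ)
        · exact Or.inl (Equiv.Perm.notMem_support.mp hbρ)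
      · push_neg at hx
        exact Or.inr (Equiv.swap_apply_of_ne_of_ne hx.1 hx.2)
    have hprod : σ * Equiv.swap a b = γ' * ρ := by
      rw [← hγρ, mul_assoc, hdisjswap.commute.eq, hγ'def, ← mul_assoc]
    have hdisj' : γ'.Disjoint ρ := by
      rw [Equiv.Perm.disjoint_iff_disjoint_support, hγ'supp, hsuppρ]
      rw [Finset.disjoint_left]
      intro x hx hx2
      rw [Finset.mem_insert] at hx
      rw [Finset.mem_sdiff] at hx2
      rcases hx with rfl | hx
      · exact hb hx2.1
      · exact hx2.2 hx
    have hfinsetdisj : _root_.Disjoint γ.support ρ.support :=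
      Equiv.Perm.disjoint_iff_disjoint_support.mp hdisj
    have hfinsetdisj' : _root_.Disjoint γ'.support ρ.support :=
      Equiv.Perm.disjoint_iff_disjoint_support.mp hdisj'
    have hct' : (σ * Equiv.swap a b).cycleType = γ'.cycleType + ρ.cycleType := by
      rw [hprod, Equiv.Perm.Disjoint.cycleType_mul hdisj']
    have hct : σ.cycleType = γ.cycleType + ρ.cycleType := by
      rw [← hγρ, Equiv.Perm.Disjoint.cycleType_mul hdisj]
    have hcardct : Multiset.card (σ * Equiv.swap a b).cycleType
        = Multiset.card σ.cycleType := by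
      rw [hct', hct, Multiset.card_add, Multiset.card_add, hγ'cyc.cycleType,
        hγcyc.cycleType]
      simp
    have hsup' : (σ * Equiv.swap a b).support = γ'.support ∪ ρ.support := by
      rw [hprod, hdisj'.support_mul]
    have hsup : σ.support = γ.support ∪ ρ.support := by
      rw [← hγρ, hdisj.support_mul]
    have hcards' : (σ * Equiv.swap a b).support.card
        = γ.support.card + 1 + ρ.support.card := by
      rw [hsup', Finset.card_union_of_disjoint hfinsetdisj', hγ'supp,
        Finset.card_insert_of_notMem hbγ]
    have hcards : σ.support.card = γ.support.card + ρ.support.card := by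
      rw [hsup, Finset.card_union_of_disjoint hfinsetdisj]
    have h1 := hcard_le (σ * Equiv.swap a b)
    rw [hcards'] at h1
    simp only [cycleCount, hcardct, hcards', hcards]
    omega
  · -- a is fixed: new 2-cycle
    have hdisj : σ.Disjoint (Equiv.swap a b) := by
      intro x
      by_cases hx : x = a ∨ x = b
      · left
        rcases hx with rfl | rfl
        · exact Equiv.Perm.notMem_support.mp ha
        · exact hσb
      · right
        push_neg at hx
        exact Equiv.swap_apply_of_ne_of_ne hx.1 hx.2
    have hswap_cyc : (Equiv.swap a b).IsCycle := Equiv.Perm.isCycle_swap hab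
    have hct : (σ * Equiv.swap a b).cycleType = σ.cycleType + {2} := by
      rw [Equiv.Perm.Disjoint.cycleType_mul hdisj, hswap_cyc.cycleType, Equiv.Perm.card_support_swap hab]
    have hsup : (σ * Equiv.swap a b).support = σ.support ∪ (Equiv.swap a b).support :=
      hdisj.support_mul
    have hdisjf : _root_.Disjoint σ.support (Equiv.swap a b).support := by
      rw [Equiv.Perm.support_swap hab]
      rw [Finset.disjoint_left]
      intro x hx hx2
      rw [Finset.mem_insert, Finset.mem_singleton] at hx2
      rcases hx2 with rfl | rfl
      · exact ha hx
      · exact hb hx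
    have hcard : (σ * Equiv.swap a b).support.card = σ.support.card + 2 := by
      rw [hsup, Finset.card_union_of_disjoint hdisjf, Equiv.Perm.card_support_swap hab]
    have h1 := hcard_le (σ * Equiv.swap a b)
    rw [hcard] at h1
    simp only [cycleCount, hct, hcard, Multiset.card_add]
    have : Multiset.card ({2} : Multiset ℕ) = 1 := rfl
    omega

namespace SMTaux

variable {n : ℕ}

variable {n : ℕ}

theorem top_swap {a b : Fin n} (hab : a ≠ b) :
    top (Equiv.swap a b) = max a.val b.val := by
  rw [top, Equiv.Perm.support_swap hab]
  rw [Finset.sup_insert, Finset.sup_singleton]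

theorem le_top_of_mem {σ : Equiv.Perm (Fin n)} {x : Fin n} (hx : x ∈ σ.support) :
    x.val ≤ top σ := Finset.le_sup hx

theorem tupleProd_nil (f : Fin 0 → Equiv.Perm (Fin n)) : tupleProd f = 1 := by
  simp [tupleProd]

theorem tupleProd_succ {r : ℕ} (f : Fin (r + 1) → Equiv.Perm (Fin n)) :
    tupleProd f = tupleProd (fun i => f i.castSucc) * f (Fin.last r) := by
  rw [tupleProd, List.ofFn_succ', List.prod_concat]
  rfl

theorem mem_support_tupleProd : ∀ {r : ℕ} (f : Fin r → Equiv.Perm (Fin n)) (x : Fin n),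
    x ∈ (tupleProd f).support → ∃ i, x ∈ (f i).support := by
  intro r
  induction r with
  | zero =>
    intro f x hx
    rw [tupleProd_nil, Equiv.Perm.support_one] at hx
    exact absurd hx (Finset.notMem_empty x)
  | succ r ih =>
    intro f x hx
    rw [tupleProd_succ] at hx
    have := Equiv.Perm.support_mul_le _ _ hx
    rw [Finset.sup_eq_union, Finset.mem_union] at this
    rcases this with h | h
    · obtain ⟨i, hi⟩ := ih _ x h
      exact ⟨i.castSucc, hi⟩
    · exact ⟨Fin.last r, h⟩

theorem prefix_smt {r : ℕ} {f : Fin (r + 1) → Equiv.Perm (Fin n)}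
    (hf : StrictlyMonotoneTuple f) :
    StrictlyMonotoneTuple (fun i : Fin r => f i.castSucc) :=
  ⟨fun i => hf.1 _, fun i j hij => hf.2 _ _ (Fin.castSucc_lt_castSucc_iff.mpr hij)⟩

/-- Structure of the last factor of a strictly monotone tuple. -/
theorem tail_struct {r : ℕ} {f : Fin (r + 1) → Equiv.Perm (Fin n)}
    (hf : StrictlyMonotoneTuple f) :
    ∃ a b : Fin n, a.val < b.val ∧ f (Fin.last r) = Equiv.swap a b ∧
      b ∉ (tupleProd (fun i : Fin r => f i.castSucc)).support ∧
      (∀ x ∈ (tupleProd f).support, x.val ≤ b.val) ∧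
      b ∈ (tupleProd f).support ∧
      (tupleProd f)⁻¹ b = a := by
  obtain ⟨c, d, hcd, heq⟩ := hf.1 (Fin.last r)
  have hvalne : c.val ≠ d.val := fun h => hcd (Fin.ext h)
  -- order them
  obtain ⟨a, b, hab, heq⟩ : ∃ a b : Fin n, a.val < b.val ∧ f (Fin.last r) = Equiv.swap a b := by
    rcases lt_or_gt_of_ne hvalne with h | h
    · exact ⟨c, d, h, heq⟩
    · exact ⟨d, c, h, heq.trans (Equiv.swap_comm c d)⟩
  have habne : a ≠ b := fun h => absurd (congrArg Fin.val h) (Nat.ne_of_lt hab)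
  have htoplast : top (f (Fin.last r)) = b.val := by
    rw [heq, top_swap habne]
    exact max_eq_right (le_of_lt hab)
  set p := tupleProd (fun i : Fin r => f i.castSucc) with hp
  have hpbound : ∀ x ∈ p.support, x.val < b.val := by
    intro x hx
    obtain ⟨i, hi⟩ := mem_support_tupleProd _ x hx
    calc x.val ≤ top (f i.castSucc) := le_top_of_mem hi
      _ < top (f (Fin.last r)) := hf.2 _ _ (Fin.castSucc_lt_last i)
      _ = b.val := htoplast
  have hbp : b ∉ p.support := fun h => lt_irrefl _ (hpbound b h)
  have hprod : tupleProd f = p * Equiv.swap a b := by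
    rw [tupleProd_succ, heq]
  have hinvb : (tupleProd f)⁻¹ b = a := by
    rw [hprod, mul_inv_rev, Equiv.Perm.mul_apply, Equiv.swap_inv]
    have : p⁻¹ b = b := by
      rw [← Equiv.Perm.support_inv] at hbp
      exact Equiv.Perm.notMem_support.mp hbp
    rw [this, Equiv.swap_apply_right]
  have hbmem : b ∈ (tupleProd f).support := by
    rw [← Equiv.Perm.support_inv, Equiv.Perm.mem_support, hinvb]
    exact habne
  refine ⟨a, b, hab, heq, hbp, ?_, hbmem, hinvb⟩
  intro x hx
  obtain ⟨i, hi⟩ := mem_support_tupleProd _ x hx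
  have h1 : x.val ≤ top (f i) := le_top_of_mem hi
  rcases lt_or_eq_of_le (Fin.le_last i) with h | h
  · exact le_of_lt (lt_of_le_of_lt h1 ((hf.2 _ _ h).trans_le htoplast.le))
  · rw [h, htoplast] at h1; exact h1

theorem exists_castSucc_eq {r : ℕ} {i : Fin (r + 1)} (h : i ≠ Fin.last r) :
    ∃ j : Fin r, i = j.castSucc :=
  ⟨⟨i.val, lt_of_le_of_ne (Nat.lt_succ_iff.mp i.isLt) (fun hh => h (Fin.ext hh))⟩, Fin.ext rfl⟩

theorem cycleCount_tupleProd : ∀ (r : ℕ) (f : Fin r → Equiv.Perm (Fin n)),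
    StrictlyMonotoneTuple f → cycleCount (tupleProd f) + r = n := by
  intro r
  induction r with
  | zero => intro f _; rw [tupleProd_nil, cycleCount_one]; omega
  | succ r ih =>
    intro f hf
    obtain ⟨a, b, hab, heq, hbp, -, -, -⟩ := tail_struct hf
    have habne : a ≠ b := fun h => absurd (congrArg Fin.val h) (Nat.ne_of_lt hab)
    have hprod : tupleProd f
        = tupleProd (fun i : Fin r => f i.castSucc) * Equiv.swap a b := by
      rw [tupleProd_succ, heq]
    have h1 := cycleCount_mul_swap habne hbp
    rw [← hprod] at h1
    have h2 := ih _ (prefix_smt hf)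
    omega

theorem exists_fact : ∀ (m : ℕ) (σ : Equiv.Perm (Fin n)), (∀ x ∈ σ.support, x.val < m) →
    ∃ (r : ℕ) (f : Fin r → Equiv.Perm (Fin n)),
      StrictlyMonotoneTuple f ∧ tupleProd f = σ ∧ ∀ i, top (f i) < m := by
  intro m
  induction m using Nat.strong_induction_on with
  | _ m ih =>
    intro σ hσ
    by_cases h1 : σ = 1
    · subst h1
      exact ⟨0, fun i => 1, ⟨fun i => i.elim0, fun i => i.elim0⟩, tupleProd_nil _,
        fun i => i.elim0⟩
    · have hne : σ.support.Nonempty :=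
        Finset.nonempty_iff_ne_empty.mpr (fun h => h1 (Equiv.Perm.support_eq_empty_iff.mp h))
      obtain ⟨b, hbmem, hbmax⟩ := Finset.exists_max_image σ.support Fin.val hne
      set a := σ⁻¹ b with hadef
      have hσa : σ a = b := Equiv.apply_symm_apply σ b
      have habne : a ≠ b := by
        intro h
        rw [h] at hσa
        exact Equiv.Perm.mem_support.mp hbmem hσa
      have hamem : a ∈ σ.support := by
        rw [Equiv.Perm.mem_support, hσa]
        exact fun h => habne h.symm
      have hab : a.val < b.val :=
        lt_of_le_of_ne (hbmax a hamem) (fun h => habne (Fin.ext h))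
      set σ' := σ * Equiv.swap a b with hσ'def
      have hσ'b : σ' b = b := by
        rw [hσ'def, Equiv.Perm.mul_apply, Equiv.swap_apply_right, hσa]
      have hσ'bound : ∀ x ∈ σ'.support, x.val < b.val := by
        intro x hx
        by_contra hge
        push_neg at hge
        have hxb : x ≠ b := by
          intro h; rw [h] at hx; exact Equiv.Perm.mem_support.mp hx hσ'b
        have hbx : b.val < x.val := lt_of_le_of_ne hge (fun h => hxb (Fin.ext h.symm))
        have hxa : x ≠ a := fun h => absurd (h ▸ hbx) (by omega)
        have hxσ : σ x = x := by
          by_contra h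
          exact absurd (hbmax x (Equiv.Perm.mem_support.mpr h)) (not_le.mpr hbx)
        have : σ' x = x := by
          rw [hσ'def, Equiv.Perm.mul_apply, Equiv.swap_apply_of_ne_of_ne hxa hxb, hxσ]
        exact Equiv.Perm.mem_support.mp hx this
      have hbm : b.val < m := hσ b hbmem
      obtain ⟨r, f, hSMT, hprod, htops⟩ := ih b.val hbm σ' hσ'bound
      refine ⟨r + 1, Fin.snoc f (Equiv.swap a b), ⟨?_, ?_⟩, ?_, ?_⟩
      · intro i
        rcases eq_or_ne i (Fin.last r) with rfl | hi
        · rw [Fin.snoc_last]; exact ⟨a, b, habne, rfl⟩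
        · obtain ⟨j, rfl⟩ := exists_castSucc_eq hi
          rw [Fin.snoc_castSucc]; exact hSMT.1 j
      · intro i j hij
        rcases eq_or_ne j (Fin.last r) with rfl | hj
        · have hi : i ≠ Fin.last r := ne_of_lt hij
          obtain ⟨i', rfl⟩ := exists_castSucc_eq hi
          rw [Fin.snoc_castSucc, Fin.snoc_last, top_swap habne,
            max_eq_right hab.le]
          exact htops i'
        · obtain ⟨j', rfl⟩ := exists_castSucc_eq hj
          have hi : i ≠ Fin.last r := ne_of_lt (lt_trans hij (Fin.castSucc_lt_last j'))
          obtain ⟨i', rfl⟩ := exists_castSucc_eq hi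
          rw [Fin.snoc_castSucc, Fin.snoc_castSucc]
          exact hSMT.2 i' j' (Fin.castSucc_lt_castSucc_iff.mp hij)
      · have hrestr : (fun i : Fin r =>
            (Fin.snoc f (Equiv.swap a b) : Fin (r+1) → Equiv.Perm (Fin n)) i.castSucc) = f := by
          funext i; rw [Fin.snoc_castSucc]
        rw [tupleProd_succ, hrestr, Fin.snoc_last, hprod, hσ'def, mul_assoc,
          Equiv.swap_mul_self, mul_one]
      · intro i
        rcases eq_or_ne i (Fin.last r) with rfl | hi
        · rw [Fin.snoc_last, top_swap habne, max_eq_right hab.le]; exact hbm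
        · obtain ⟨j, rfl⟩ := exists_castSucc_eq hi
          rw [Fin.snoc_castSucc]
          exact lt_trans (htops j) hbm

theorem unique_fact : ∀ (r r' : ℕ) (f : Fin r → Equiv.Perm (Fin n))
    (f' : Fin r' → Equiv.Perm (Fin n)), StrictlyMonotoneTuple f → StrictlyMonotoneTuple f' →
    tupleProd f = tupleProd f' →
    (⟨r, f⟩ : (k : ℕ) × (Fin k → Equiv.Perm (Fin n))) = ⟨r', f'⟩ := by
  intro r
  induction r with
  | zero =>
    intro r' f f' hf hf' hprod
    cases r' with
    | zero =>
      have : f = f' := funext fun i => i.elim0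
      rw [this]
    | succ r' =>
      obtain ⟨a, b, -, -, -, -, hbmem, -⟩ := tail_struct hf'
      rw [← hprod, tupleProd_nil, Equiv.Perm.support_one] at hbmem
      exact absurd hbmem (Finset.notMem_empty b)
  | succ r ih =>
    intro r' f f' hf hf' hprod
    cases r' with
    | zero =>
      obtain ⟨a, b, -, -, -, -, hbmem, -⟩ := tail_struct hf
      rw [hprod, tupleProd_nil, Equiv.Perm.support_one] at hbmem
      exact absurd hbmem (Finset.notMem_empty b)
    | succ r' =>
      obtain ⟨a, b, hab, heq, -, hbound, hbmem, hinv⟩ := tail_struct hf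
      obtain ⟨a', b', hab', heq', -, hbound', hbmem', hinv'⟩ := tail_struct hf'
      rw [hprod] at hbound hbmem hinv
      have hbb : b = b' :=
        Fin.ext (le_antisymm (hbound' b hbmem) (hbound b' hbmem'))
      subst hbb
      have haa : a = a' := hinv.symm.trans hinv'
      subst haa
      have heq2 : f (Fin.last r) = f' (Fin.last r') := heq.trans heq'.symm
      have hpre : tupleProd (fun i : Fin r => f i.castSucc)
          = tupleProd (fun i : Fin r' => f' i.castSucc) := by
        have e1 := tupleProd_succ f
        have e2 := tupleProd_succ f'
        rw [e1, e2, heq, heq'] at hprod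
        exact mul_right_cancel hprod
      have hres := ih r' (fun i : Fin r => f i.castSucc) (fun i : Fin r' => f' i.castSucc) (prefix_smt hf) (prefix_smt hf') hpre
      obtain ⟨hr, h2⟩ := Sigma.mk.inj_iff.mp hres
      subst hr
      have h3 := eq_of_heq h2
      have : f = f' := by
        funext i
        rcases eq_or_ne i (Fin.last r) with rfl | hi
        · exact heq2
        · obtain ⟨j, rfl⟩ := exists_castSucc_eq hi
          exact congrFun h3 j
      rw [this]

end SMTaux

end Aux

/-- Every `σ ∈ S_n` has exactly one strictly monotone factorization
into transpositions; its length is `n - #σ`.  Consequently the product of any strictly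
monotone `r`-tuple of transpositions has exactly `n - r` cycles. -/
theorem existsUnique_strictly_monotone_factorization (n : ℕ) (hn : 1 ≤ n)
    (σ : Equiv.Perm (Fin n)) :
    (∃! p : (r : ℕ) × (Fin r → Equiv.Perm (Fin n)),
        StrictlyMonotoneTuple p.2 ∧ tupleProd p.2 = σ) ∧
    (∀ (r : ℕ) (f : Fin r → Equiv.Perm (Fin n)),
        StrictlyMonotoneTuple f → tupleProd f = σ → r = n - cycleCount σ) ∧
    (∀ (r : ℕ) (f : Fin r → Equiv.Perm (Fin n)),
        StrictlyMonotoneTuple f → cycleCount (tupleProd f) = n - r) := by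
  constructor
  · obtain ⟨r, f, hSMT, hprod, -⟩ :=
      SMTaux.exists_fact n σ (fun x _ => x.isLt)
    refine ⟨⟨r, f⟩, ⟨hSMT, hprod⟩, ?_⟩
    rintro ⟨r', f'⟩ ⟨hSMT', hprod'⟩
    exact SMTaux.unique_fact r' r f' f hSMT' hSMT (hprod'.trans hprod.symm)
  constructor
  · intro r f hf hp
    have h := SMTaux.cycleCount_tupleProd r f hf
    rw [hp] at h
    omega
  · intro r f hf
    have h := SMTaux.cycleCount_tupleProd r f hf
    omega
end

section
/- Let n ≥ 1, let σ ∈ S_n, and let (τ_1,…,τ_r) be the unique strictly monotone tuple of transpositions with τ_1 τ_2 ⋯ τ_r = σ. Then for every α ∈ S_n, the subgroup of S_n generated by α and σ acts transitively on [n] if and only if the subgroup generated by α, τ_1, …, τ_r acts transitively on [n]. -/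
lemma sameCycle_of_steps {β : Type*} (σ π : Equiv.Perm β)
    (h : ∀ x, σ.SameCycle x (π x)) : ∀ x y, π.SameCycle x y → σ.SameCycle x y := by
  have hinv : ∀ x, σ.SameCycle x (π⁻¹ x) := by
    intro x
    have := h (π⁻¹ x)
    rw [Equiv.Perm.inv_def, Equiv.apply_symm_apply] at this
    exact this.symm
  have key : ∀ k : ℤ, ∀ x, σ.SameCycle x ((π ^ k) x) := by
    intro k
    induction k using Int.induction_on with
    | zero => intro x; simp [Equiv.Perm.SameCycle.refl]
    | succ k ih =>
        intro x
        have : (π ^ ((k : ℤ) + 1)) x = (π ^ (k : ℤ)) (π x) := by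
          rw [zpow_add_one, Equiv.Perm.mul_apply]
        rw [this]; exact (h x).trans (ih (π x))
    | pred k ih =>
        intro x
        have : (π ^ (-(k : ℤ) - 1)) x = (π ^ (-(k : ℤ))) (π⁻¹ x) := by
          rw [zpow_sub_one, Equiv.Perm.mul_apply]
        rw [this]; exact (hinv x).trans (ih (π⁻¹ x))
  rintro x y ⟨k, hk⟩
  rw [← hk]; exact key k x

lemma tupleProd_apply_fixed {n r : ℕ} (f : Fin r → Equiv.Perm (Fin n)) (p : Fin n)
    (h : ∀ i, f i p = p) : tupleProd f p = p := by
  induction r with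
  | zero => simp [tupleProd]
  | succ r ih =>
      rw [tupleProd, List.ofFn_succ']
      simp only [List.concat_eq_append, List.prod_append, List.prod_cons,
        List.prod_nil, mul_one, Equiv.Perm.mul_apply]
      rw [h (Fin.last r)]
      exact ih _ (fun i => h i.castSucc)

lemma strictMono_sameCycle {n r : ℕ} (f : Fin r → Equiv.Perm (Fin n))
    (hf : StrictlyMonotoneTuple f) (σ : Equiv.Perm (Fin n)) (hprod : tupleProd f = σ) :
    ∀ (i : Fin r) (x : Fin n), σ.SameCycle x (f i x) := by
  induction r generalizing σ with
  | zero => exact fun i => i.elim0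
  | succ r ih =>
      set g : Fin r → Equiv.Perm (Fin n) := fun i => f i.castSucc with hg
      set τ : Equiv.Perm (Fin n) := f (Fin.last r) with hτ
      have hg' : StrictlyMonotoneTuple g := by
        refine ⟨fun i => hf.1 _, fun i j hij => hf.2 _ _ ?_⟩
        simpa [Fin.castSucc_lt_castSucc_iff] using hij
      set σ' : Equiv.Perm (Fin n) := tupleProd g with hσ'
      have hfac : σ = σ' * τ := by
        rw [← hprod]
        simp only [tupleProd, hσ', hg, hτ, List.ofFn_succ', List.concat_eq_append,
          List.prod_append, List.prod_cons, List.prod_nil, mul_one]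
      obtain ⟨a, b, hab, hτab⟩ := hf.1 (Fin.last r)
      rw [← hτ] at hτab
      have hτne : τ.support.Nonempty := by
        rw [hτab]
        exact ⟨a, by simp [Equiv.Perm.mem_support, Equiv.swap_apply_left, hab]⟩
      obtain ⟨p, hp, hpval⟩ := Finset.exists_mem_eq_sup _ hτne Fin.val
      have hσ'p : σ' p = p := by
        refine tupleProd_apply_fixed g p (fun i => ?_)
        by_contra hne
        have h1 : (p : ℕ) ≤ top (g i) := Finset.le_sup (Equiv.Perm.mem_support.mpr hne)
        have h2 : top (g i) < top τ := hf.2 _ _ (Fin.castSucc_lt_last i)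
        have h3 : top τ = (p : ℕ) := by unfold top; exact hpval
        omega
      set q : Fin n := τ p with hq
      have hττ : τ q = p := by rw [hq, hτab, Equiv.swap_apply_self]
      have hσq : σ q = p := by rw [hfac, Equiv.Perm.mul_apply, hττ, hσ'p]
      have hqp : σ.SameCycle q p := ⟨1, by simpa using hσq⟩
      have hstep : ∀ x, σ.SameCycle x (τ x) := by
        intro x
        by_cases hxp : x = p
        · rw [hxp, ← hq]; exact hqp.symm
        by_cases hxq : x = q
        · rw [hxq, hττ]; exact hqp
        · have hpab : p = a ∨ p = b := by
            have := hp
            rw [hτab, Equiv.Perm.support_swap hab] at this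
            simpa using this
          have hqv : (p = a ∧ q = b) ∨ (p = b ∧ q = a) := by
            rcases hpab with h | h
            · exact Or.inl ⟨h, by rw [hq, hτab, h, Equiv.swap_apply_left]⟩
            · exact Or.inr ⟨h, by rw [hq, hτab, h, Equiv.swap_apply_right]⟩
          have hτx : τ x = x := by
            rw [hτab]
            rcases hqv with ⟨h1, h2⟩ | ⟨h1, h2⟩
            · exact Equiv.swap_apply_of_ne_of_ne (h1 ▸ hxp) (h2 ▸ hxq)
            · exact Equiv.swap_apply_of_ne_of_ne (h2 ▸ hxq) (h1 ▸ hxp)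
          rw [hτx]
      have hσ'step : ∀ x, σ.SameCycle x (σ' x) := by
        intro x
        have : σ' x = σ (τ x) := by
          rw [hfac]
          have : τ (τ x) = x := by rw [hτab, Equiv.swap_apply_self]
          simp [Equiv.Perm.mul_apply, this]
        rw [this]
        exact (hstep x).trans ⟨1, by simp⟩
      intro i x
      refine Fin.lastCases ?_ ?_ i
      · exact hstep x
      · intro j
        exact sameCycle_of_steps σ σ' hσ'step x (g j x) (ih g hg' σ' rfl j x)


/-- If `(τ_1,…,τ_r)` is the (unique) strictly monotone factorization
of `σ` into transpositions, then for every `α`, the subgroup generated by `α` and `σ`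
acts transitively on `[n]` iff the subgroup generated by `α, τ_1, …, τ_r` does. -/
theorem transitive_closure_iff_of_strictly_monotone_factorization (n : ℕ) (hn : 1 ≤ n)
    (σ : Equiv.Perm (Fin n)) (r : ℕ) (f : Fin r → Equiv.Perm (Fin n))
    (hf : StrictlyMonotoneTuple f) (hprod : tupleProd f = σ)
    (α : Equiv.Perm (Fin n)) :
    ActsTransitively {α, σ} ↔ ActsTransitively ({α} ∪ Set.range f) := by
  set S : Set (Equiv.Perm (Fin n)) := {α, σ} with hS
  set T : Set (Equiv.Perm (Fin n)) := {α} ∪ Set.range f with hT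
  have hST : Subgroup.closure S ≤ Subgroup.closure T := by
    rw [Subgroup.closure_le]
    rintro g (rfl | rfl)
    · exact Subgroup.subset_closure (Or.inl rfl)
    · rw [← hprod, tupleProd]
      refine Subgroup.list_prod_mem _ ?_
      intro x hx
      obtain ⟨i, rfl⟩ := List.mem_ofFn.mp hx
      exact Subgroup.subset_closure (Or.inr ⟨i, rfl⟩)
  constructor
  · intro h x y
    obtain ⟨g, hg, hgx⟩ := h x y
    exact ⟨g, hST hg, hgx⟩
  · intro h x y
    have hσS : σ ∈ Subgroup.closure S := Subgroup.subset_closure (Or.inr rfl)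
    have hsc : ∀ u v : Fin n, σ.SameCycle u v → ∃ g ∈ Subgroup.closure S, g u = v := by
      rintro u v ⟨k, hk⟩
      exact ⟨σ ^ k, Subgroup.zpow_mem _ hσS k, hk⟩
    -- every element of closure T can be simulated pointwise by closure S
    have key : ∀ g ∈ Subgroup.closure T, ∀ u : Fin n,
        ∃ g' ∈ Subgroup.closure S, g' u = g u := by
      intro g hg
      induction hg using Subgroup.closure_induction with
      | mem g hgT =>
          rcases hgT with rfl | ⟨i, rfl⟩
          · exact fun u => ⟨g, Subgroup.subset_closure (Or.inl rfl), rfl⟩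
          · intro u
            exact hsc u (f i u) (strictMono_sameCycle f hf σ hprod i u)
      | one => exact fun u => ⟨1, Subgroup.one_mem _, rfl⟩
      | mul g₁ g₂ hg₁ hg₂ ih₁ ih₂ =>
          intro u
          obtain ⟨a, ha, hau⟩ := ih₂ u
          obtain ⟨b, hb, hbu⟩ := ih₁ (g₂ u)
          exact ⟨b * a, Subgroup.mul_mem _ hb ha, by
            simp [Equiv.Perm.mul_apply, hau, hbu]⟩
      | inv g hg ih =>
          intro u
          obtain ⟨a, ha, hau⟩ := ih (g⁻¹ u)
          refine ⟨a⁻¹, Subgroup.inv_mem _ ha, ?_⟩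
          exact (by simpa using congrArg (⇑a⁻¹) hau : _ = _).symm ▸ rfl
    obtain ⟨g, hg, hgx⟩ := h x y
    obtain ⟨g', hg', hg'x⟩ := key g hg x
    exact ⟨g', hg', by rw [hg'x, hgx]⟩
end

section
/- Let μ and ν be integer partitions of n and let g ≥ 0 be an integer. Then the number of pairs (α, β) ∈ S_n × S_n such that α has cycle type μ, the product αβ has cycle type ν, #μ + #β + #ν − n = 2 − 2g, and the subgroup generated by α and β acts transitively on [n], equals the strictly monotone double Hurwitz number H^↑↑_g(μ,ν). -/
/-- The strictly monotone double Hurwitz number `H^↑↑_g(μ,ν)`: the number of tuples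
`(α, τ_1, …, τ_r, β)` with `r = #μ + #ν + 2g - 2`, where `α` has cycle type `μ`,
`β = α τ_1 ⋯ τ_r` has cycle type `ν`, the `τ_i` are transpositions forming a strictly
monotone tuple, and `⟨α, τ_1, …, τ_r⟩` acts transitively on `[n]`.  (Such a tuple is
determined by the pair `(α, (τ_1,…,τ_r))`.) -/
noncomputable def strictHurwitz (n g : ℕ) (μ ν : n.Partition) : ℕ :=
  Nat.card {p : Equiv.Perm (Fin n) ×
      (Fin (Multiset.card μ.parts + Multiset.card ν.parts + 2 * g - 2) →
        Equiv.Perm (Fin n)) //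
    fullCycleType p.1 = μ.parts ∧
    fullCycleType (p.1 * tupleProd p.2) = ν.parts ∧
    StrictlyMonotoneTuple p.2 ∧
    ActsTransitively ({p.1} ∪ Set.range p.2)}

/-- The (weakly) monotone double Hurwitz number `H^↑_g(μ,ν)`: as `strictHurwitz`, with
the weak monotonicity condition instead. -/
noncomputable def monotoneHurwitz (n g : ℕ) (μ ν : n.Partition) : ℕ :=
  Nat.card {p : Equiv.Perm (Fin n) ×
      (Fin (Multiset.card μ.parts + Multiset.card ν.parts + 2 * g - 2) →
        Equiv.Perm (Fin n)) //
    fullCycleType p.1 = μ.parts ∧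
    fullCycleType (p.1 * tupleProd p.2) = ν.parts ∧
    WeaklyMonotoneTuple p.2 ∧
    ActsTransitively ({p.1} ∪ Set.range p.2)}

namespace SMAux

open Equiv Equiv.Perm Finset

variable {n : ℕ}

lemma le_top_of_mem_support {τ : Equiv.Perm (Fin n)} {x : Fin n} (h : x ∈ τ.support) :
    x.val ≤ top τ := Finset.le_sup h

lemma apply_eq_self_of_top_lt {τ : Equiv.Perm (Fin n)} {x : Fin n} (h : top τ < x.val) :
    τ x = x := by
  by_contra hx
  exact absurd (le_top_of_mem_support (Equiv.Perm.mem_support.mpr hx)) (not_le.mpr h)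

lemma list_prod_apply_eq_self {l : List (Equiv.Perm (Fin n))} {x : Fin n}
    (h : ∀ τ ∈ l, τ x = x) : l.prod x = x := by
  induction l with
  | nil => simp
  | cons τ l ih =>
      rw [List.prod_cons, Equiv.Perm.mul_apply,
        ih (fun τ' h' => h τ' (List.mem_cons_of_mem _ h'))]
      exact h τ List.mem_cons_self

lemma top_swap {a b : Fin n} (hab : a.val < b.val) : top (Equiv.swap a b) = b.val := by
  have hne : a ≠ b := by
    intro h; rw [h] at hab; exact lt_irrefl _ hab
  rw [top, Equiv.Perm.support_swap hne]
  rw [show ({a, b} : Finset (Fin n)) = insert a {b} from rfl, Finset.sup_insert,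
    Finset.sup_singleton]
  exact sup_eq_right.mpr hab.le

/-- Strictly monotone list of transpositions. -/
def SMList (l : List (Equiv.Perm (Fin n))) : Prop :=
  (∀ τ ∈ l, τ.IsSwap) ∧ (l.map top).Chain' (· < ·)

lemma SMList.nil : SMList ([] : List (Equiv.Perm (Fin n))) := ⟨by simp, List.isChain_nil⟩

lemma SMList.of_concat {l : List (Equiv.Perm (Fin n))} {τ : Equiv.Perm (Fin n)}
    (h : SMList (l ++ [τ])) : SMList l ∧ ∀ τ' ∈ l, top τ' < top τ := by
  obtain ⟨hsw, hch⟩ := h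
  rw [List.map_append, List.Chain', List.isChain_iff_pairwise, List.pairwise_append] at hch
  obtain ⟨h1, _, h3⟩ := hch
  refine ⟨⟨fun τ' h' => hsw τ' (List.mem_append_left _ h'), List.isChain_iff_pairwise.mpr h1⟩, ?_⟩
  intro τ' h'
  exact h3 (top τ') (List.mem_map_of_mem h') (top τ) (by simp)

lemma SMList.concat {l : List (Equiv.Perm (Fin n))} {τ : Equiv.Perm (Fin n)}
    (h : SMList l) (htop : ∀ τ' ∈ l, top τ' < top τ) (hsw : τ.IsSwap) :
    SMList (l ++ [τ]) := by
  obtain ⟨h1, h2⟩ := h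
  refine ⟨?_, ?_⟩
  · intro τ' h'
    rcases List.mem_append.mp h' with h' | h'
    · exact h1 τ' h'
    · simp only [List.mem_singleton] at h'; subst h'; exact hsw
  · rw [List.map_append, List.Chain', List.isChain_iff_pairwise, List.pairwise_append]
    refine ⟨List.isChain_iff_pairwise.mp h2, by simp, ?_⟩
    intro x hx y hy
    simp only [List.map_cons, List.map_nil, List.mem_singleton] at hy
    subst hy
    obtain ⟨τ', hτ', rfl⟩ := List.mem_map.mp hx
    exact htop τ' hτ'

lemma IsSwap.exists_val_lt {τ : Equiv.Perm (Fin n)} (h : τ.IsSwap) :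
    ∃ a b : Fin n, a.val < b.val ∧ τ = Equiv.swap a b := by
  obtain ⟨x, y, hxy, rfl⟩ := h
  rcases lt_or_gt_of_ne (fun h : x.val = y.val => hxy (Fin.ext h)) with h | h
  · exact ⟨x, y, h, rfl⟩
  · exact ⟨y, x, h, Equiv.swap_comm x y⟩

/-- Key structural facts about the product of a strictly monotone concat. -/
lemma concat_facts {l' : List (Equiv.Perm (Fin n))} {a b : Fin n} (hab : a.val < b.val)
    (htops : ∀ τ ∈ l', top τ < b.val) :
    (l' ++ [Equiv.swap a b]).prod = l'.prod * Equiv.swap a b ∧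
    l'.prod b = b ∧
    (l' ++ [Equiv.swap a b]).prod a = b ∧
    (l' ++ [Equiv.swap a b]).prod b ≠ b ∧
    (∀ x ∈ ((l' ++ [Equiv.swap a b]).prod).support, x.val ≤ b.val) := by
  have hne : a ≠ b := by intro h; rw [h] at hab; exact lt_irrefl _ hab
  have hprod : (l' ++ [Equiv.swap a b]).prod = l'.prod * Equiv.swap a b := by
    rw [List.prod_append, List.prod_singleton]
  have hπb : l'.prod b = b :=
    list_prod_apply_eq_self (fun τ hτ => apply_eq_self_of_top_lt (htops τ hτ))
  have hσa : (l' ++ [Equiv.swap a b]).prod a = b := by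
    rw [hprod, Equiv.Perm.mul_apply, Equiv.swap_apply_left, hπb]
  have hσb : (l' ++ [Equiv.swap a b]).prod b = l'.prod a := by
    rw [hprod, Equiv.Perm.mul_apply, Equiv.swap_apply_right]
  have hσbne : (l' ++ [Equiv.swap a b]).prod b ≠ b := by
    rw [hσb]
    intro h
    exact hne (l'.prod.injective (h.trans hπb.symm))
  refine ⟨hprod, hπb, hσa, hσbne, ?_⟩
  intro x hx
  by_contra hgt
  push_neg at hgt
  have hxa : x ≠ a := by intro h; subst h; exact absurd (hab.trans hgt) (lt_irrefl _)
  have hxb : x ≠ b := by intro h; subst h; exact absurd hgt (lt_irrefl _)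
  have : (l' ++ [Equiv.swap a b]).prod x = x := by
    rw [hprod, Equiv.Perm.mul_apply, Equiv.swap_apply_of_ne_of_ne hxa hxb]
    exact list_prod_apply_eq_self (fun τ hτ => apply_eq_self_of_top_lt ((htops τ hτ).trans hgt))
  exact absurd this (Equiv.Perm.mem_support.mp hx)


/-- Lifting same-cycle along multiplication by a swap that inserts a fixed point `b`
into the cycle of `a`. -/
lemma sameCycle_mul_swap {π : Equiv.Perm (Fin n)} {a b : Fin n} (hab : a ≠ b) (hb : π b = b)
    {x y : Fin n} (h : π.SameCycle x y) : (π * Equiv.swap a b).SameCycle x y := by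
  set σ := π * Equiv.swap a b with hσ
  have hσa : σ a = b := by
    rw [hσ, Equiv.Perm.mul_apply, Equiv.swap_apply_left, hb]
  have hσb : σ b = π a := by
    rw [hσ, Equiv.Perm.mul_apply, Equiv.swap_apply_right]
  have hother : ∀ z : Fin n, z ≠ a → z ≠ b → σ z = π z := by
    intro z h1 h2
    rw [hσ, Equiv.Perm.mul_apply, Equiv.swap_apply_of_ne_of_ne h1 h2]
  obtain ⟨i, -, hi⟩ := h.exists_pow_eq'
  subst hi
  clear h
  induction i with
  | zero => exact Equiv.Perm.SameCycle.refl σ x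
  | succ i ih =>
      have hstep : (π ^ (i + 1)) x = π ((π ^ i) x) := by
        rw [pow_succ', Equiv.Perm.mul_apply]
      rw [hstep]
      set z := (π ^ i) x with hz
      by_cases hzb : z = b
      · rw [hzb, hb, ← hzb]; exact ih
      by_cases hza : z = a
      · refine ih.trans ?_
        have : (σ ^ (2 : ℤ)) z = π z := by
          have : σ (σ z) = π z := by rw [hza, hσa, hσb]
          simpa [zpow_ofNat, pow_succ, Equiv.Perm.mul_apply] using this
        exact ⟨2, this⟩
      · refine ih.trans ⟨1, ?_⟩
        simpa using hother z hza hzb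

/-- Joining a fixed point `b` to the cycle of `a`: the cycle count drops by one. -/
lemma cycleCount_mul_swap {π : Equiv.Perm (Fin n)} {a b : Fin n} (hab : a ≠ b) (hb : π b = b) :
    cycleCount (π * Equiv.swap a b) + 1 = cycleCount π := by
  have hbs : b ∉ π.support := by simp [Equiv.Perm.mem_support, hb]
  by_cases ha : π a = a
  · -- disjoint case
    have hd : π.Disjoint (Equiv.swap a b) := by
      intro x
      by_cases hxa : x = a
      · subst hxa; exact Or.inl ha
      by_cases hxb : x = b
      · subst hxb; exact Or.inl hb
      · exact Or.inr (Equiv.swap_apply_of_ne_of_ne hxa hxb)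
    have hct : (π * Equiv.swap a b).cycleType = π.cycleType + (Equiv.swap a b).cycleType :=
      hd.cycleType_mul
    have hcs : (π * Equiv.swap a b).support.card = π.support.card + 2 := by
      rw [hd.card_support_mul, Equiv.Perm.card_support_swap hab]
    have hswct : (Equiv.swap a b).cycleType = [2] := by
      rw [(Equiv.Perm.isCycle_swap hab).cycleType, Equiv.Perm.card_support_swap hab]
      rfl
    have hle : π.support.card + 2 ≤ n := by
      rw [← hcs]
      have := Finset.card_le_univ (π * Equiv.swap a b).support
      simpa using this
    simp only [cycleCount, hct, hcs, hswct]
    simp only [Multiset.card_add, Multiset.coe_card, List.length_singleton]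
    omega
  · -- a is in a nontrivial cycle of π
    set c := π.cycleOf a with hc
    have hcyc : c.IsCycle := π.isCycle_cycleOf ha
    have hca : c a = π a := π.cycleOf_apply_self a
    have hcF : c ∈ π.cycleFactorsFinset :=
      Equiv.Perm.cycleOf_mem_cycleFactorsFinset_iff.mpr (Equiv.Perm.mem_support.mpr ha)
    have hsupc : c.support ⊆ π.support := Equiv.Perm.support_cycleOf_le π a
    have hbc : b ∉ c.support := fun h => hbs (hsupc h)
    have hcb : c b = b := by
      by_contra h; exact hbc (Equiv.Perm.mem_support.mpr h)
    have hac : a ∈ c.support := Equiv.Perm.mem_support.mpr (by rw [hca]; exact ha)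
    set c' := c * Equiv.swap a b with hc'
    have hc'a : c' a = b := by rw [hc', Equiv.Perm.mul_apply, Equiv.swap_apply_left, hcb]
    have hc'b : c' b = c a := by rw [hc', Equiv.Perm.mul_apply, Equiv.swap_apply_right]
    have hc'other : ∀ z : Fin n, z ≠ a → z ≠ b → c' z = c z := by
      intro z h1 h2
      rw [hc', Equiv.Perm.mul_apply, Equiv.swap_apply_of_ne_of_ne h1 h2]
    have hcamem : c a ∈ c.support := by
      rw [Equiv.Perm.mem_support]
      intro h
      exact (Equiv.Perm.mem_support.mp hac) (c.injective h)
    have hcanb : c a ≠ b := fun h => hbc (h ▸ hcamem)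
    have hsupc' : c'.support = insert b c.support := by
      ext x
      by_cases hxa : x = a
      · subst hxa
        simp only [Equiv.Perm.mem_support, hc'a]
        exact ⟨fun _ => Finset.mem_insert_of_mem hac, fun _ h => hab h.symm⟩
      by_cases hxb : x = b
      · subst hxb
        simp only [Equiv.Perm.mem_support, hc'b]
        exact ⟨fun _ => Finset.mem_insert_self _ _, fun _ => hcanb⟩
      · simp only [Equiv.Perm.mem_support, hc'other x hxa hxb, Finset.mem_insert, hxb,
          false_or]
    -- c' is a cycle
    have hc'cyc : c'.IsCycle := by
      refine ⟨b, by rw [hc'b]; exact hcanb.symm ∘ Eq.symm, ?_⟩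
      intro y hy
      have hy' : y ∈ c'.support := Equiv.Perm.mem_support.mpr hy
      rw [hsupc'] at hy'
      rcases Finset.mem_insert.mp hy' with rfl | hy'
      · exact Equiv.Perm.SameCycle.refl _ _
      · have h1 : c'.SameCycle a y :=
          sameCycle_mul_swap hab hcb
            (hcyc.sameCycle (Equiv.Perm.mem_support.mp hac) (Equiv.Perm.mem_support.mp hy'))
        have h2 : c'.SameCycle a b := ⟨1, by simpa using hc'a⟩
        exact h2.symm.trans h1
    -- the new cycle factor finset
    have hc'notF : ∀ d ∈ π.cycleFactorsFinset, c' ≠ d := by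
      intro d hd h
      have : b ∈ d.support := by rw [← h, hsupc']; exact Finset.mem_insert_self _ _
      exact hbs (Equiv.Perm.mem_cycleFactorsFinset_support_le hd this)
    set F := π.cycleFactorsFinset with hF
    have hc'erase : c' ∉ F.erase c := fun h => hc'notF c' (Finset.mem_of_mem_erase h) rfl
    set s : Finset (Equiv.Perm (Fin n)) := insert c' (F.erase c) with hs
    -- all cycles
    have hs1 : ∀ f ∈ s, f.IsCycle := by
      intro f hf
      rcases Finset.mem_insert.mp hf with rfl | hf
      · exact hc'cyc
      · exact (Equiv.Perm.mem_cycleFactorsFinset_iff.mp (Finset.mem_of_mem_erase hf)).1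
    -- pairwise disjoint
    have hdisj : ∀ d ∈ F.erase c, c'.Disjoint d := by
      intro d hd
      have hdF : d ∈ F := Finset.mem_of_mem_erase hd
      have hdc : d ≠ c := Finset.ne_of_mem_erase hd
      have hcd : c.Disjoint d :=
        (π.cycleFactorsFinset_pairwise_disjoint hcF hdF (Ne.symm hdc)).symm.symm
      intro x
      by_cases hx : x ∈ c'.support
      · right
        rw [hsupc'] at hx
        rcases Finset.mem_insert.mp hx with rfl | hx
        · by_contra hdb
          exact hbs (Equiv.Perm.mem_cycleFactorsFinset_support_le hdF
            (Equiv.Perm.mem_support.mpr hdb))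
        · rcases hcd x with h | h
          · exact absurd h (Equiv.Perm.mem_support.mp hx)
          · exact h
      · left
        exact Equiv.Perm.notMem_support.mp hx
    have hs2 : (s : Set (Equiv.Perm (Fin n))).Pairwise Equiv.Perm.Disjoint := by
      rw [hs, Finset.coe_insert]
      haveI : Std.Symm (Equiv.Perm.Disjoint (α := Fin n)) := ⟨fun f g h => h.symm⟩
      refine Set.pairwise_insert_of_symm |>.mpr ⟨?_, ?_⟩
      · exact (π.cycleFactorsFinset_pairwise_disjoint).mono
          (by exact_mod_cast Finset.erase_subset c F)
      · intro d hd _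
        exact hdisj d hd
    -- product
    have hπP : π = c * (F.erase c).noncommProd id
        ((π.cycleFactorsFinset_mem_commute).mono
          (by exact_mod_cast Finset.erase_subset c F)) := by
      have h1 : F.noncommProd id π.cycleFactorsFinset_mem_commute =
          (insert c (F.erase c)).noncommProd id
            (by rw [Finset.insert_erase hcF]; exact π.cycleFactorsFinset_mem_commute) :=
        Finset.noncommProd_congr (f := id) (g := id)
        (Finset.insert_erase hcF).symm (fun _ _ => rfl)
        (π.cycleFactorsFinset_mem_commute)
      have h2 := π.cycleFactorsFinset_noncommProd
      rw [h1] at h2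
      rw [Finset.noncommProd_insert_of_notMem _ _ _ _ (Finset.notMem_erase c F)] at h2
      exact h2.symm
    set P := (F.erase c).noncommProd id
        ((π.cycleFactorsFinset_mem_commute).mono
          (by exact_mod_cast Finset.erase_subset c F)) with hP
    have hPeq : P = c⁻¹ * π := by rw [hπP, inv_mul_cancel_left]
    have hPa : P a = a := by
      rw [hPeq, Equiv.Perm.mul_apply, ← hca, show c⁻¹ (c a) = a from c.symm_apply_apply a]
    have hPb : P b = b := by
      rw [hPeq, Equiv.Perm.mul_apply, hb, Equiv.Perm.inv_eq_iff_eq]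
      exact hcb.symm
    have hcomm : Commute (Equiv.swap a b) P := by
      apply Equiv.Perm.Disjoint.commute
      intro x
      by_cases hxa : x = a
      · subst hxa; exact Or.inr hPa
      by_cases hxb : x = b
      · subst hxb; exact Or.inr hPb
      · exact Or.inl (Equiv.swap_apply_of_ne_of_ne hxa hxb)
    have hs0 : s.noncommProd id (hs2.mono' fun _ _ => Equiv.Perm.Disjoint.commute)
        = π * Equiv.swap a b := by
      have h1 : s.noncommProd id (hs2.mono' fun _ _ => Equiv.Perm.Disjoint.commute)
          = c' * P := by
        show (insert c' (F.erase c)).noncommProd id _ = c' * P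
        rw [Finset.noncommProd_insert_of_notMem _ _ _ _ hc'erase]
        rfl
      rw [h1, hπP, hc', mul_assoc, mul_assoc, hcomm.eq]
    -- cycle type card
    have hct : (π * Equiv.swap a b).cycleType = s.1.map (Finset.card ∘ Equiv.Perm.support) :=
      Equiv.Perm.cycleType_eq' s hs1 hs2 hs0
    have hcards : s.card = F.card := by
      rw [hs, Finset.card_insert_of_notMem hc'erase,
        Finset.card_erase_of_mem hcF]
      have : 0 < F.card := Finset.card_pos.mpr ⟨c, hcF⟩
      omega
    have hctcard : Multiset.card (π * Equiv.swap a b).cycleType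
        = Multiset.card π.cycleType := by
      rw [hct, Multiset.card_map, Equiv.Perm.cycleType_def, Multiset.card_map]
      exact_mod_cast hcards
    -- support
    have haπ : a ∈ π.support := Equiv.Perm.mem_support.mpr ha
    have hsupσ : (π * Equiv.swap a b).support = insert b π.support := by
      ext x
      have hσa' : (π * Equiv.swap a b) a = b := by
        rw [Equiv.Perm.mul_apply, Equiv.swap_apply_left, hb]
      have hσb' : (π * Equiv.swap a b) b = π a := by
        rw [Equiv.Perm.mul_apply, Equiv.swap_apply_right]
      by_cases hxa : x = a
      · rw [hxa, Equiv.Perm.mem_support, hσa']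
        exact ⟨fun _ => Finset.mem_insert_of_mem haπ, fun _ h => hab h.symm⟩
      by_cases hxb : x = b
      · rw [hxb, Equiv.Perm.mem_support, hσb']
        refine ⟨fun _ => Finset.mem_insert_self _ _, fun _ h => ?_⟩
        exact hbs (h ▸ Equiv.Perm.apply_mem_support.mpr haπ)
      · have : (π * Equiv.swap a b) x = π x := by
          rw [Equiv.Perm.mul_apply, Equiv.swap_apply_of_ne_of_ne hxa hxb]
        simp only [Equiv.Perm.mem_support, this, Finset.mem_insert, hxb, false_or]
    have hsupcard : (π * Equiv.swap a b).support.card = π.support.card + 1 := by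
      rw [hsupσ, Finset.card_insert_of_notMem hbs]
    have hle : π.support.card + 1 ≤ n := by
      rw [← hsupcard]
      have := Finset.card_le_univ (π * Equiv.swap a b).support
      simpa using this
    simp only [cycleCount, hsupcard, hctcard]
    omega


-- new material

lemma ne_of_val_lt {a b : Fin n} (hab : a.val < b.val) : a ≠ b := by
  intro h; rw [h] at hab; exact lt_irrefl _ hab

lemma smlist_prod_ne_one {l : List (Equiv.Perm (Fin n))} {τ : Equiv.Perm (Fin n)}
    (h : SMList (l ++ [τ])) : (l ++ [τ]).prod ≠ 1 := by
  obtain ⟨a, b, hab, rfl⟩ := IsSwap.exists_val_lt (h.1 τ (by simp))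
  have htops : ∀ τ' ∈ l, top τ' < b.val := fun τ' h' => (top_swap hab) ▸ h.of_concat.2 τ' h'
  obtain ⟨-, -, -, hne, -⟩ := concat_facts hab htops
  intro h1
  rw [h1] at hne
  exact hne rfl

lemma smlist_eq_nil {l : List (Equiv.Perm (Fin n))} (h : SMList l) (hp : l.prod = 1) :
    l = [] := by
  rcases l.eq_nil_or_concat with rfl | ⟨l', τ, hc⟩
  · rfl
  · rw [List.concat_eq_append] at hc
    subst hc
    exact absurd hp (smlist_prod_ne_one h)

lemma smlist_unique : ∀ (k : ℕ) (l₁ l₂ : List (Equiv.Perm (Fin n))), l₁.length ≤ k →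
    SMList l₁ → SMList l₂ → l₁.prod = l₂.prod → l₁ = l₂ := by
  intro k
  induction k with
  | zero =>
      intro l₁ l₂ hlen h1 h2 hp
      have h0 : l₁ = [] := List.eq_nil_of_length_eq_zero (Nat.le_zero.mp hlen)
      subst h0
      exact (smlist_eq_nil h2 (by rw [← hp, List.prod_nil])).symm
  | succ k ih =>
      intro l₁ l₂ hlen h1 h2 hp
      rcases l₁.eq_nil_or_concat with rfl | ⟨m₁, τ₁, hc₁⟩
      · exact (smlist_eq_nil h2 (by rw [← hp, List.prod_nil])).symm
      rw [List.concat_eq_append] at hc₁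
      subst hc₁
      rcases l₂.eq_nil_or_concat with rfl | ⟨m₂, τ₂, hc₂⟩
      · exact absurd (hp.trans List.prod_nil) (smlist_prod_ne_one h1)
      rw [List.concat_eq_append] at hc₂
      subst hc₂
      obtain ⟨a₁, b₁, hab₁, rfl⟩ := IsSwap.exists_val_lt (h1.1 τ₁ (by simp))
      obtain ⟨a₂, b₂, hab₂, rfl⟩ := IsSwap.exists_val_lt (h2.1 τ₂ (by simp))
      have htops₁ : ∀ τ' ∈ m₁, top τ' < b₁.val :=
        fun τ' h' => (top_swap hab₁) ▸ h1.of_concat.2 τ' h'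
      have htops₂ : ∀ τ' ∈ m₂, top τ' < b₂.val :=
        fun τ' h' => (top_swap hab₂) ▸ h2.of_concat.2 τ' h'
      obtain ⟨hprod₁, -, hσa₁, hne₁, hbd₁⟩ := concat_facts hab₁ htops₁
      obtain ⟨hprod₂, -, hσa₂, hne₂, hbd₂⟩ := concat_facts hab₂ htops₂
      have hb : b₁ = b₂ := by
        have h1' : b₁.val ≤ b₂.val := by
          rw [hp] at hne₁
          exact hbd₂ b₁ (Equiv.Perm.mem_support.mpr hne₁)
        have h2' : b₂.val ≤ b₁.val := by
          rw [← hp] at hne₂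
          exact hbd₁ b₂ (Equiv.Perm.mem_support.mpr hne₂)
        exact Fin.ext (le_antisymm h1' h2')
      subst hb
      have ha : a₁ = a₂ := by
        apply (m₁ ++ [Equiv.swap a₁ b₁]).prod.injective
        rw [hσa₁, hp, hσa₂]
      subst ha
      have hmm : m₁.prod = m₂.prod := by
        have : m₁.prod * Equiv.swap a₁ b₁ = m₂.prod * Equiv.swap a₁ b₁ := by
          rw [← hprod₁, ← hprod₂, hp]
        exact mul_right_cancel this
      have hlen' : m₁.length ≤ k := by
        have := hlen
        simp only [List.length_append, List.length_singleton] at this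
        omega
      rw [ih m₁ m₂ hlen' h1.of_concat.1 h2.of_concat.1 hmm]

lemma smlist_exists : ∀ (k : ℕ) (σ : Equiv.Perm (Fin n)), σ.support.card ≤ k →
    ∃ l : List (Equiv.Perm (Fin n)), SMList l ∧ l.prod = σ ∧
      l.length + cycleCount σ = n ∧ ∀ τ ∈ l, top τ ≤ top σ := by
  intro k
  induction k with
  | zero =>
      intro σ hcard
      have hσ : σ = 1 := Equiv.Perm.card_support_eq_zero.mp (Nat.le_zero.mp hcard)
      subst hσ
      refine ⟨[], SMList.nil, List.prod_nil, ?_, by simp⟩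
      simp [cycleCount, Equiv.Perm.support_one, Equiv.Perm.cycleType_one]
  | succ k ih =>
      intro σ hcard
      by_cases hσ : σ = 1
      · subst hσ
        refine ⟨[], SMList.nil, List.prod_nil, ?_, by simp⟩
        simp [cycleCount, Equiv.Perm.support_one, Equiv.Perm.cycleType_one]
      have hne : σ.support.Nonempty :=
        Finset.nonempty_iff_ne_empty.mpr (fun h => hσ (Equiv.Perm.support_eq_empty_iff.mp h))
      set b := σ.support.max' hne with hbdef
      have hbmem : b ∈ σ.support := σ.support.max'_mem hne
      have hmax : ∀ x ∈ σ.support, x ≤ b := fun x hx => Finset.le_max' _ x hx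
      set a := σ⁻¹ b with hadef
      have haapp : σ a = b := σ.apply_symm_apply b
      have hbne : σ b ≠ b := Equiv.Perm.mem_support.mp hbmem
      have hane : a ≠ b := by
        intro h
        rw [h] at haapp
        exact hbne haapp
      have hasupp : a ∈ σ.support := by
        rw [Equiv.Perm.mem_support, haapp]
        exact fun h => hane h.symm
      have haval : a.val < b.val := by
        have h1 : a ≤ b := hmax a hasupp
        exact Fin.lt_def.mp (lt_of_le_of_ne h1 hane)
      set σ' := σ * Equiv.swap a b with hσ'def
      have hσ'b : σ' b = b := by
        rw [hσ'def, Equiv.Perm.mul_apply, Equiv.swap_apply_right, haapp]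
      have hsub : σ'.support ⊆ σ.support.erase b := by
        intro x hx
        have hxne : σ' x ≠ x := Equiv.Perm.mem_support.mp hx
        have hxb : x ≠ b := by
          intro h; rw [h] at hxne; exact hxne hσ'b
        rw [Finset.mem_erase]
        refine ⟨hxb, ?_⟩
        by_cases hxa : x = a
        · rw [hxa]; exact hasupp
        · rw [Equiv.Perm.mem_support]
          intro h
          apply hxne
          rw [hσ'def, Equiv.Perm.mul_apply, Equiv.swap_apply_of_ne_of_ne hxa hxb, h]
      have hcard' : σ'.support.card ≤ k := by
        have h1 : σ'.support.card ≤ (σ.support.erase b).card := Finset.card_le_card hsub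
        have h2 : (σ.support.erase b).card = σ.support.card - 1 :=
          Finset.card_erase_of_mem hbmem
        have h3 : 1 ≤ σ.support.card := Finset.card_pos.mpr hne
        omega
      obtain ⟨l', hsm', hp', hlen', htops'⟩ := ih σ' hcard'
      have hσeq : σ' * Equiv.swap a b = σ := by
        rw [hσ'def, mul_assoc, Equiv.swap_mul_self, mul_one]
      have hjoin : cycleCount σ + 1 = cycleCount σ' := by
        have := cycleCount_mul_swap hane hσ'b
        rw [hσeq] at this
        exact this
      have htopσ : top σ = b.val := by
        apply le_antisymm
        · exact Finset.sup_le (fun x hx => hmax x hx)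
        · exact Finset.le_sup hbmem
      have hsuplt : ∀ x ∈ σ'.support, x.val < b.val := by
        intro x hx
        have := Finset.mem_erase.mp (hsub hx)
        have hle : x ≤ b := hmax x this.2
        exact lt_of_le_of_ne hle (fun h => this.1 (Fin.ext h))
      have htopσ'lt : top σ' < b.val := by
        rw [top]
        rw [Finset.sup_lt_iff (lt_of_le_of_lt bot_le haval)]
        exact hsuplt
      refine ⟨l' ++ [Equiv.swap a b], ?_, ?_, ?_, ?_⟩
      · refine hsm'.concat ?_ ⟨a, b, hane, rfl⟩
        intro τ' hτ'
        rw [top_swap haval]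
        exact lt_of_le_of_lt (htops' τ' hτ') htopσ'lt
      · rw [List.prod_append, List.prod_singleton, hp', hσeq]
      · simp only [List.length_append, List.length_singleton]
        omega
      · intro τ hτ
        rcases List.mem_append.mp hτ with h | h
        · rw [htopσ]
          exact le_of_lt (lt_of_le_of_lt (htops' τ h) htopσ'lt)
        · simp only [List.mem_singleton] at h
          subst h
          rw [top_swap haval, htopσ]

lemma smlist_length_add {l : List (Equiv.Perm (Fin n))} (h : SMList l) :
    l.length + cycleCount l.prod = n := by
  obtain ⟨l₀, h0, hp0, hlen0, -⟩ := smlist_exists l.prod.support.card l.prod le_rfl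
  have heq : l = l₀ := smlist_unique l.length l l₀ le_rfl h h0 hp0.symm
  subst heq
  exact hlen0

lemma smlist_sameCycle {l : List (Equiv.Perm (Fin n))} (h : SMList l) :
    ∀ τ ∈ l, ∀ x, (l.prod).SameCycle x (τ x) := by
  induction l using List.reverseRecOn with
  | nil => intro τ hτ; simp at hτ
  | append_singleton l' τ ih =>
      obtain ⟨hsm', htoplt⟩ := h.of_concat
      obtain ⟨a, b, hab, rfl⟩ := IsSwap.exists_val_lt (h.1 τ (by simp))
      have hane : a ≠ b := ne_of_val_lt hab
      have htops : ∀ τ' ∈ l', top τ' < b.val :=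
        fun τ' h' => (top_swap hab) ▸ htoplt τ' h'
      obtain ⟨hprod, hπb, hσa, -, -⟩ := concat_facts hab htops
      intro τ₀ hτ₀ x
      rcases List.mem_append.mp hτ₀ with h₀ | h₀
      · have hsc := ih hsm' τ₀ h₀ x
        rw [hprod]
        exact sameCycle_mul_swap hane hπb hsc
      · simp only [List.mem_singleton] at h₀
        subst h₀
        by_cases hxa : x = a
        · subst hxa
          rw [Equiv.swap_apply_left]
          exact ⟨1, by simpa using hσa⟩
        by_cases hxb : x = b
        · subst hxb
          rw [Equiv.swap_apply_right]
          exact (Equiv.Perm.SameCycle.symm ⟨1, by simpa using hσa⟩)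
        · rw [Equiv.swap_apply_of_ne_of_ne hxa hxb]

lemma smtuple_iff_smlist {r : ℕ} {f : Fin r → Equiv.Perm (Fin n)} :
    StrictlyMonotoneTuple f ↔ SMList (List.ofFn f) := by
  constructor
  · rintro ⟨h1, h2⟩
    refine ⟨?_, ?_⟩
    · intro τ hτ
      obtain ⟨i, rfl⟩ := List.mem_ofFn.mp hτ
      exact h1 i
    · rw [List.map_ofFn, List.Chain', List.isChain_iff_pairwise, List.pairwise_ofFn]
      intro i j hij
      exact h2 i j hij
  · rintro ⟨h1, h2⟩
    refine ⟨fun i => h1 _ (List.mem_ofFn.mpr ⟨i, rfl⟩), fun i j hij => ?_⟩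
    rw [List.map_ofFn, List.Chain', List.isChain_iff_pairwise, List.pairwise_ofFn] at h2
    exact h2 hij

lemma orbit_transfer {S : Set (Equiv.Perm (Fin n))} {H : Subgroup (Equiv.Perm (Fin n))}
    (hmem : ∀ z ∈ S, ∀ x : Fin n, ∃ h ∈ H, h x = z x) :
    ∀ g ∈ Subgroup.closure S, ∀ x : Fin n, ∃ h ∈ H, h x = g x := by
  intro g hg'
  induction hg' using Subgroup.closure_induction with
  | mem z hz => exact hmem z hz
  | one => intro x; exact ⟨1, Subgroup.one_mem _, rfl⟩
  | mul u v hu hv ihu ihv =>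
      intro x
      obtain ⟨h2, hh2, hh2x⟩ := ihv x
      obtain ⟨h1, hh1, hh1x⟩ := ihu (v x)
      refine ⟨h1 * h2, Subgroup.mul_mem _ hh1 hh2, ?_⟩
      rw [Equiv.Perm.mul_apply, Equiv.Perm.mul_apply, hh2x, hh1x]
  | inv u hu ihu =>
      intro x
      obtain ⟨h, hh, hhx⟩ := ihu (u⁻¹ x)
      rw [show u (u⁻¹ x) = x from u.apply_symm_apply x] at hhx
      exact ⟨h⁻¹, Subgroup.inv_mem _ hh, Equiv.Perm.inv_eq_iff_eq.mpr hhx.symm⟩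

lemma transitive_iff {r : ℕ} (α : Equiv.Perm (Fin n)) (f : Fin r → Equiv.Perm (Fin n))
    (hf : StrictlyMonotoneTuple f) :
    ActsTransitively ({α} ∪ Set.range f) ↔ ActsTransitively {α, tupleProd f} := by
  constructor
  · intro ht x y
    obtain ⟨g, hg, hgx⟩ := ht x y
    have hmem : ∀ z ∈ ({α} ∪ Set.range f : Set (Equiv.Perm (Fin n))), ∀ x : Fin n,
        ∃ h ∈ Subgroup.closure ({α, tupleProd f} : Set (Equiv.Perm (Fin n))), h x = z x := by
      intro z hz x
      rcases hz with hz | hz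
      · rw [Set.mem_singleton_iff] at hz
        subst hz
        exact ⟨z, Subgroup.subset_closure (Set.mem_insert _ _), rfl⟩
      · obtain ⟨i, rfl⟩ := hz
        have hmem2 : f i ∈ List.ofFn f := List.mem_ofFn.mpr ⟨i, rfl⟩
        have hsl : SMList (List.ofFn f) := smtuple_iff_smlist.mp hf
        have hsc : ((List.ofFn f).prod).SameCycle x (f i x) :=
          smlist_sameCycle hsl (f i) hmem2 x
        obtain ⟨k, hk⟩ := hsc
        have hβmem : tupleProd f ∈ Subgroup.closure ({α, tupleProd f} :
            Set (Equiv.Perm (Fin n))) :=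
          Subgroup.subset_closure (Set.mem_insert_of_mem _ rfl)
        refine ⟨(tupleProd f) ^ k, zpow_mem hβmem k, ?_⟩
        exact hk
    obtain ⟨h, hh, hhx⟩ := orbit_transfer hmem g hg x
    exact ⟨h, hh, hhx.trans hgx⟩
  · intro ht x y
    obtain ⟨g, hg, hgx⟩ := ht x y
    refine ⟨g, ?_, hgx⟩
    have hle : Subgroup.closure ({α, tupleProd f} : Set (Equiv.Perm (Fin n))) ≤
        Subgroup.closure ({α} ∪ Set.range f) := by
      rw [Subgroup.closure_le]
      intro z hz
      rcases hz with hz | hz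
      · exact Subgroup.subset_closure (Or.inl hz)
      · rw [Set.mem_singleton_iff] at hz
        subst hz
        show tupleProd f ∈ Subgroup.closure ({α} ∪ Set.range f)
        rw [tupleProd]
        apply Subgroup.list_prod_mem
        intro z hz
        obtain ⟨i, rfl⟩ := List.mem_ofFn.mp hz
        exact Subgroup.subset_closure (Or.inr ⟨i, rfl⟩)
    exact hle hg


lemma partition_card_pos {n : ℕ} (hn : 1 ≤ n) (μ : n.Partition) :
    1 ≤ Multiset.card μ.parts := by
  by_contra h
  have h0 : Multiset.card μ.parts = 0 := by omega
  have := μ.parts_sum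
  rw [Multiset.card_eq_zero.mp h0] at this
  simp at this
  omega

end SMAux

/-- For partitions `μ, ν ⊢ n` and `g ≥ 0`, the number of pairs
`(α, β) ∈ S_n × S_n` with `α` of cycle type `μ`, `αβ` of cycle type `ν`,
`#μ + #β + #ν - n = 2 - 2g`, and `⟨α, β⟩` transitive on `[n]`, equals the strictly
monotone double Hurwitz number `H^↑↑_g(μ,ν)`. -/
theorem card_constellations_eq_strictHurwitz (n g : ℕ) (hn : 1 ≤ n)
    (μ ν : n.Partition) :
    Nat.card {p : Equiv.Perm (Fin n) × Equiv.Perm (Fin n) //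
      fullCycleType p.1 = μ.parts ∧
      fullCycleType (p.1 * p.2) = ν.parts ∧
      Multiset.card μ.parts + cycleCount p.2 + Multiset.card ν.parts + 2 * g = n + 2 ∧
      ActsTransitively {p.1, p.2}} = strictHurwitz n g μ ν := by
  classical
  have hμ1 : 1 ≤ Multiset.card μ.parts := SMAux.partition_card_pos hn μ
  have hν1 : 1 ≤ Multiset.card ν.parts := SMAux.partition_card_pos hn ν
  rw [strictHurwitz]
  set R := Multiset.card μ.parts + Multiset.card ν.parts + 2 * g - 2 with hR
  have hmemF : ∀ (a : Equiv.Perm (Fin n)) (f : Fin R → Equiv.Perm (Fin n)),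
      (fullCycleType a = μ.parts ∧ fullCycleType (a * tupleProd f) = ν.parts ∧
        StrictlyMonotoneTuple f ∧ ActsTransitively ({a} ∪ Set.range f)) →
      (fullCycleType a = μ.parts ∧ fullCycleType (a * tupleProd f) = ν.parts ∧
        Multiset.card μ.parts + cycleCount (tupleProd f) + Multiset.card ν.parts + 2 * g
          = n + 2 ∧
        ActsTransitively {a, tupleProd f}) := by
    intro a f ⟨h1, h2, h3, h4⟩
    refine ⟨h1, h2, ?_, (SMAux.transitive_iff a f h3).mp h4⟩
    have hlen := SMAux.smlist_length_add (SMAux.smtuple_iff_smlist.mp h3)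
    rw [List.length_ofFn] at hlen
    have h5 : cycleCount (tupleProd f) = cycleCount ((List.ofFn f).prod) := rfl
    rw [h5]
    omega
  refine (Nat.card_eq_of_bijective
    (fun p => ⟨(p.1.1, tupleProd p.1.2), hmemF p.1.1 p.1.2 p.2⟩) ⟨?_, ?_⟩).symm
  · -- injective
    rintro ⟨⟨a1, f1⟩, h1⟩ ⟨⟨a2, f2⟩, h2⟩ heq
    simp only [Subtype.mk.injEq, Prod.mk.injEq] at heq
    obtain ⟨ha, hb⟩ := heq
    subst ha
    have hl : List.ofFn f1 = List.ofFn f2 := by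
      apply SMAux.smlist_unique (List.ofFn f1).length _ _ le_rfl
        (SMAux.smtuple_iff_smlist.mp h1.2.2.1) (SMAux.smtuple_iff_smlist.mp h2.2.2.1)
      exact hb
    have hf : f1 = f2 := List.ofFn_injective hl
    subst hf
    rfl
  · -- surjective
    rintro ⟨⟨a, b⟩, hq⟩
    obtain ⟨h1, h2, h3, h4⟩ := hq
    obtain ⟨l, hsm, hp, hlen, -⟩ := SMAux.smlist_exists b.support.card b le_rfl
    have h3' : Multiset.card μ.parts + cycleCount b + Multiset.card ν.parts + 2 * g = n + 2 :=
      h3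
    have hlr : l.length = R := by omega
    have hofn : List.ofFn (fun i : Fin R => l.get (Fin.cast hlr.symm i)) = l := by
      apply List.ext_get
      · simp [hlr]
      · intro i hi1 hi2
        simp [List.get_ofFn]
    have hβ : tupleProd (fun i : Fin R => l.get (Fin.cast hlr.symm i)) = b := by
      rw [tupleProd, hofn, hp]
    have hsmt : StrictlyMonotoneTuple (fun i : Fin R => l.get (Fin.cast hlr.symm i)) :=
      SMAux.smtuple_iff_smlist.mpr (by rw [hofn]; exact hsm)
    refine ⟨⟨(a, fun i : Fin R => l.get (Fin.cast hlr.symm i)),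
      ⟨h1, by rw [hβ]; exact h2, hsmt, ?_⟩⟩, ?_⟩
    · rw [SMAux.transitive_iff _ _ hsmt, hβ]
      exact h4
    · apply Subtype.ext
      show (a, tupleProd fun i : Fin R => l.get (Fin.cast hlr.symm i)) = (a, b)
      rw [hβ]
end

section
/- Let π be a set partition of [n] and r ≥ 0. Call a transposition of [n] π-internal if both of its moved points lie in the same block of π, and let W^↑_r(π) be the set of weakly monotone r-tuples of π-internal transpositions. For w ∈ W^↑_r(π) and a block B of π, let w|_B denote the subtuple of entries of w that move points of B. Then the map w ↦ (w|_B)_{B ∈ π} is a bijection from W^↑_r(π) onto the disjoint union, over all families (r_B)_{B ∈ π} of nonnegative integers with ∑_{B ∈ π} r_B = r, of the products ∏_{B ∈ π} W^↑_{r_B}(B), where W^↑_{r_B}(B) is the set of weakly monotone r_B-tuples of transpositions whose moved points both lie in B. -/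
/-- A weakly monotone list of transpositions: every entry is a transposition, and the
tops are weakly increasing along the list. -/
def WeaklyMonotoneList {n : ℕ} (w : List (Equiv.Perm (Fin n))) : Prop :=
  (∀ τ ∈ w, τ.IsSwap) ∧ w.Pairwise (fun a b => top a ≤ top b)

section Aux

variable {n : ℕ} (π : Finpartition (Finset.univ : Finset (Fin n)))

lemma swap_support_nonempty {τ : Equiv.Perm (Fin n)} (h : τ.IsSwap) :
    τ.support.Nonempty := by
  obtain ⟨x, y, hxy, rfl⟩ := h
  rw [Equiv.Perm.support_swap hxy]
  exact ⟨x, by simp⟩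

lemma block_unique {B B' : Finset (Fin n)} (hB : B ∈ π.parts) (hB' : B' ∈ π.parts)
    {τ : Equiv.Perm (Fin n)} (hne : τ.support.Nonempty)
    (h1 : τ.support ⊆ B) (h2 : τ.support ⊆ B') : B = B' := by
  obtain ⟨x, hx⟩ := hne
  exact π.eq_of_mem_parts hB hB' (h1 hx) (h2 hx)

lemma same_top_same_block {B B' : Finset (Fin n)} (hB : B ∈ π.parts) (hB' : B' ∈ π.parts)
    {τ σ : Equiv.Perm (Fin n)} (hτ : τ.support.Nonempty) (hσ : σ.support.Nonempty)
    (h1 : τ.support ⊆ B) (h2 : σ.support ⊆ B') (htop : top τ = top σ) : B = B' := by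
  obtain ⟨x, hx, hxv⟩ := Finset.exists_mem_eq_sup τ.support hτ Fin.val
  obtain ⟨y, hy, hyv⟩ := Finset.exists_mem_eq_sup σ.support hσ Fin.val
  have hxy : x = y := Fin.val_injective (by rw [← hxv, ← hyv]; exact htop)
  exact π.eq_of_mem_parts hB hB' (h1 hx) (h2 (hxy ▸ hy))

lemma sum_filter_length :
    ∀ w : List (Equiv.Perm (Fin n)), (∀ τ ∈ w, τ.IsSwap) →
    (∀ τ ∈ w, ∃ B ∈ π.parts, τ.support ⊆ B) →
    ∑ B : π.parts, (w.filter (fun τ => decide (τ.support ⊆ B.1))).length = w.length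
  | [], _, _ => by simp
  | τ :: t, hswap, hblock => by
    obtain ⟨B₀, hB₀, hsub⟩ := hblock τ (List.mem_cons_self)
    have hne : τ.support.Nonempty := swap_support_nonempty (hswap τ (List.mem_cons_self))
    have key : ∀ B : π.parts, (τ.support ⊆ B.1) ↔ B = ⟨B₀, hB₀⟩ := by
      intro B
      constructor
      · intro h
        exact Subtype.ext (block_unique π B.2 hB₀ hne h hsub)
      · rintro rfl; exact hsub
    calc ∑ B : π.parts, ((τ :: t).filter (fun τ => decide (τ.support ⊆ B.1))).length
        = ∑ B : π.parts, ((if B = ⟨B₀, hB₀⟩ then 1 else 0) +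
            (t.filter (fun τ => decide (τ.support ⊆ B.1))).length) := by
          refine Finset.sum_congr rfl fun B _ => ?_
          rw [List.filter_cons]
          by_cases h : τ.support ⊆ B.1
          · have hBe := (key B).mp h
            subst hBe
            simp [hsub, Nat.add_comm]
          · rw [if_neg (by simpa using h), if_neg (fun hc => h ((key B).mpr hc))]
            simp
      _ = t.length + 1 := by
          rw [Finset.sum_add_distrib, Finset.sum_ite_eq' Finset.univ (⟨B₀, hB₀⟩ : π.parts)
            (fun _ => 1), sum_filter_length t (fun τ h => hswap τ (List.mem_cons_of_mem _ h))
            (fun τ h => hblock τ (List.mem_cons_of_mem _ h))]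
          simp [Nat.add_comm]
      _ = (τ :: t).length := by simp

lemma inj_aux :
    ∀ w w' : List (Equiv.Perm (Fin n)),
    (∀ τ ∈ w, τ.IsSwap) → (∀ τ ∈ w, ∃ B ∈ π.parts, τ.support ⊆ B) →
    (∀ τ ∈ w', τ.IsSwap) → (∀ τ ∈ w', ∃ B ∈ π.parts, τ.support ⊆ B) →
    w.Pairwise (fun a b => top a ≤ top b) → w'.Pairwise (fun a b => top a ≤ top b) →
    (∀ B ∈ π.parts, w.filter (fun τ => decide (τ.support ⊆ B)) =
      w'.filter (fun τ => decide (τ.support ⊆ B))) →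
    w = w'
  | [], [], _, _, _, _, _, _, _ => rfl
  | [], σ :: t', _, _, hs', hb', _, _, hf => by
      obtain ⟨B, hB, hsub⟩ := hb' σ (List.mem_cons_self)
      have : σ ∈ (σ :: t').filter (fun τ => decide (τ.support ⊆ B)) := by
        simp [hsub]
      rw [← hf B hB] at this
      simp at this
  | τ :: t, [], hs, hb, _, _, _, _, hf => by
      obtain ⟨B, hB, hsub⟩ := hb τ (List.mem_cons_self)
      have : τ ∈ (τ :: t).filter (fun τ => decide (τ.support ⊆ B)) := by
        simp [hsub]
      rw [hf B hB] at this
      simp at this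
  | τ :: t, σ :: t', hs, hb, hs', hb', hsort, hsort', hf => by
      obtain ⟨B, hB, hsubτ⟩ := hb τ (List.mem_cons_self)
      obtain ⟨B', hB', hsubσ⟩ := hb' σ (List.mem_cons_self)
      have hneτ : τ.support.Nonempty := swap_support_nonempty (hs τ (List.mem_cons_self))
      have hneσ : σ.support.Nonempty := swap_support_nonempty (hs' σ (List.mem_cons_self))
      -- τ is a member of w'
      have hτw' : τ ∈ σ :: t' := by
        have : τ ∈ (τ :: t).filter (fun τ => decide (τ.support ⊆ B)) := by simp [hsubτ]
        rw [hf B hB] at this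
        exact List.mem_of_mem_filter this
      have hσw : σ ∈ τ :: t := by
        have : σ ∈ (σ :: t').filter (fun τ => decide (τ.support ⊆ B')) := by simp [hsubσ]
        rw [← hf B' hB'] at this
        exact List.mem_of_mem_filter this
      have h1 : top σ ≤ top τ := by
        rcases List.mem_cons.mp hτw' with h | h
        · rw [h]
        · exact (List.pairwise_cons.mp hsort').1 τ h
      have h2 : top τ ≤ top σ := by
        rcases List.mem_cons.mp hσw with h | h
        · rw [h]
        · exact (List.pairwise_cons.mp hsort).1 σ h
      have htop : top τ = top σ := le_antisymm h2 h1
      have hBB' : B = B' := same_top_same_block π hB hB' hneτ hneσ hsubτ hsubσ htop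
      subst hBB'
      -- heads are equal
      have hcons : τ :: t.filter (fun τ => decide (τ.support ⊆ B)) =
          σ :: t'.filter (fun τ => decide (τ.support ⊆ B)) := by
        have := hf B hB
        rwa [List.filter_cons_of_pos (by simp [hsubτ]),
          List.filter_cons_of_pos (by simp [hsubσ])] at this
      have hτσ : τ = σ := (List.cons.injEq _ _ _ _ ▸ hcons).1
      have htails : ∀ C ∈ π.parts, t.filter (fun τ => decide (τ.support ⊆ C)) =
          t'.filter (fun τ => decide (τ.support ⊆ C)) := by
        intro C hC
        by_cases hCB : C = B
        · subst hCB
          exact (List.cons.injEq _ _ _ _ ▸ hcons).2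
        · have hτC : ¬ τ.support ⊆ C := fun h => hCB (block_unique π hC hB hneτ h hsubτ)
          have hσC : ¬ σ.support ⊆ C := fun h => hCB (block_unique π hC hB hneσ h hsubσ)
          have := hf C hC
          rwa [List.filter_cons_of_neg (by simp [hτC]),
            List.filter_cons_of_neg (by simp [hσC])] at this
      rw [hτσ]
      congr 1
      exact inj_aux t t' (fun τ h => hs τ (List.mem_cons_of_mem _ h))
        (fun τ h => hb τ (List.mem_cons_of_mem _ h))
        (fun τ h => hs' τ (List.mem_cons_of_mem _ h))
        (fun τ h => hb' τ (List.mem_cons_of_mem _ h))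
        (List.pairwise_cons.mp hsort).2 (List.pairwise_cons.mp hsort').2 htails

end Aux

section Aux2

variable {n : ℕ} (π : Finpartition (Finset.univ : Finset (Fin n)))

lemma sorted_head_le {l : List (Equiv.Perm (Fin n))}
    (hl : l.Pairwise (fun a b => top a ≤ top b))
    {σ : Equiv.Perm (Fin n)} (hσ : σ ∈ l) : top l.headI ≤ top σ := by
  cases l with
  | nil => simp at hσ
  | cons x xs =>
    rcases List.mem_cons.mp hσ with h | h
    · simp [h]
    · exact (List.pairwise_cons.mp hl).1 σ h

lemma surj_aux : ∀ (r : ℕ) (g : π.parts → List (Equiv.Perm (Fin n))),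
    (∀ B : π.parts, WeaklyMonotoneList (g B) ∧ ∀ τ ∈ g B, τ.support ⊆ B.1) →
    ∑ B : π.parts, (g B).length = r →
    ∃ w : List (Equiv.Perm (Fin n)), w.length = r ∧ WeaklyMonotoneList w ∧
      (∀ τ ∈ w, ∃ B ∈ π.parts, τ.support ⊆ B) ∧
      ∀ B : π.parts, w.filter (fun τ => decide (τ.support ⊆ B.1)) = g B
  | 0, g, hg, hsum => by
    have hall : ∀ B : π.parts, g B = [] := fun B =>
      List.length_eq_zero_iff.mp (Finset.sum_eq_zero_iff.mp hsum B (Finset.mem_univ B))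
    exact ⟨[], rfl, ⟨by simp, List.Pairwise.nil⟩, by simp, fun B => by simp [hall B]⟩
  | r + 1, g, hg, hsum => by
    classical
    have hS : (Finset.univ.filter fun B : π.parts => g B ≠ []).Nonempty := by
      by_contra h
      rw [Finset.not_nonempty_iff_eq_empty, Finset.filter_eq_empty_iff] at h
      have : ∑ B : π.parts, (g B).length = 0 :=
        Finset.sum_eq_zero fun B _ => by simp [not_not.mp (h (Finset.mem_univ B))]
      omega
    obtain ⟨B₀, hB₀S, hmin⟩ := Finset.exists_min_image _ (fun B => top (g B).headI) hS
    have hB₀ne : g B₀ ≠ [] := (Finset.mem_filter.mp hB₀S).2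
    obtain ⟨τ, t, hgB₀⟩ := List.exists_cons_of_ne_nil hB₀ne
    have hτswap : τ.IsSwap := (hg B₀).1.1 τ (by rw [hgB₀]; exact List.mem_cons_self)
    have hτne : τ.support.Nonempty := swap_support_nonempty hτswap
    have hsubτ : τ.support ⊆ B₀.1 := (hg B₀).2 τ (by rw [hgB₀]; exact List.mem_cons_self)
    set g' : π.parts → List (Equiv.Perm (Fin n)) := Function.update g B₀ t with hg'def
    have hg'B₀ : g' B₀ = t := Function.update_self _ _ _
    have hg'ne : ∀ B, B ≠ B₀ → g' B = g B := fun B hB => Function.update_of_ne hB _ _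
    have hcond : ∀ B : π.parts, WeaklyMonotoneList (g' B) ∧ ∀ τ ∈ g' B, τ.support ⊆ B.1 := by
      intro B
      by_cases hB : B = B₀
      · subst hB
        rw [hg'B₀]
        obtain ⟨⟨hsw, hso⟩, hsup⟩ := hg B
        rw [hgB₀] at hsw hso hsup
        exact ⟨⟨fun σ h => hsw σ (List.mem_cons_of_mem _ h),
          (List.pairwise_cons.mp hso).2⟩, fun σ h => hsup σ (List.mem_cons_of_mem _ h)⟩
      · rw [hg'ne B hB]; exact hg B
    have hsum' : ∑ B : π.parts, (g' B).length = r := by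
      have hsplit : ∀ f : π.parts → ℕ,
          ∑ B : π.parts, f B = f B₀ + ∑ B ∈ Finset.univ.erase B₀, f B := fun f =>
        (Finset.add_sum_erase _ f (Finset.mem_univ B₀)).symm
      have e1 := hsplit fun B => (g' B).length
      have e2 := hsplit fun B => (g B).length
      have e3 : ∑ B ∈ Finset.univ.erase B₀, (g' B).length =
          ∑ B ∈ Finset.univ.erase B₀, (g B).length :=
        Finset.sum_congr rfl fun B hB => by rw [hg'ne B (Finset.ne_of_mem_erase hB)]
      rw [hsum] at e2
      rw [e1, e3, hg'B₀]
      rw [hgB₀] at e2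
      simp only [List.length_cons] at e2
      omega
    obtain ⟨w', hlen', hwm', hblk', hfil'⟩ := surj_aux r g' hcond hsum'
    refine ⟨τ :: w', by simp [hlen'], ⟨?_, ?_⟩, ?_, ?_⟩
    · rintro σ hσ
      rcases List.mem_cons.mp hσ with h | h
      · rw [h]; exact hτswap
      · exact hwm'.1 σ h
    · refine List.pairwise_cons.mpr ⟨fun σ hσ => ?_, hwm'.2⟩
      obtain ⟨B, hB, hsubσ⟩ := hblk' σ hσ
      have hσg' : σ ∈ g' ⟨B, hB⟩ := by
        rw [← hfil' ⟨B, hB⟩]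
        exact List.mem_filter.mpr ⟨hσ, by simpa using hsubσ⟩
      by_cases hBB : (⟨B, hB⟩ : π.parts) = B₀
      · rw [hBB, hg'B₀] at hσg'
        have hso := (hg B₀).1.2
        rw [hgB₀] at hso
        exact (List.pairwise_cons.mp hso).1 σ hσg'
      · rw [hg'ne _ hBB] at hσg'
        have hBne : g ⟨B, hB⟩ ≠ [] := List.ne_nil_of_mem hσg'
        have h1 : top (g B₀).headI ≤ top (g ⟨B, hB⟩).headI :=
          hmin _ (Finset.mem_filter.mpr ⟨Finset.mem_univ _, hBne⟩)
        have h2 : top (g ⟨B, hB⟩).headI ≤ top σ := sorted_head_le ((hg ⟨B, hB⟩).1.2) hσg'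
        rw [hgB₀] at h1
        simpa using le_trans (by simpa using h1) h2
    · rintro σ hσ
      rcases List.mem_cons.mp hσ with h | h
      · exact ⟨B₀.1, B₀.2, h ▸ hsubτ⟩
      · exact hblk' σ h
    · intro B
      rw [List.filter_cons]
      by_cases hBB : B = B₀
      · subst hBB
        rw [if_pos (by simpa using hsubτ), hfil' B, hg'B₀, hgB₀]
      · have hτB : ¬ τ.support ⊆ B.1 := fun h =>
          hBB (Subtype.ext (block_unique π B.2 B₀.2 hτne h hsubτ))
        rw [if_neg (by simpa using hτB), hfil' B, hg'ne B hBB]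

end Aux2

/-- Let `π` be a set partition of `[n]` (a `Finpartition` of
`Finset.univ`).  Say a transposition is `π`-internal if its two moved points (i.e.
its support) lie in one block of `π`.  The map sending a weakly monotone `r`-tuple
`w` of `π`-internal transpositions to the family of its subtuples
`w|_B = (entries with support in B)`, indexed by the blocks `B` of `π`, is a bijection
onto the set of families `(w_B)_{B ∈ π}` of weakly monotone tuples of transpositions
internal to the respective blocks with total length `r` (the disjoint union, over
`(r_B)_B` with `∑_B r_B = r`, of the products `∏_B W^↑_{r_B}(B)`). -/
theorem bijOn_blockwise_decomposition_monotone_tuples (n r : ℕ) (hn : 1 ≤ n)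
    (π : Finpartition (Finset.univ : Finset (Fin n))) :
    Set.BijOn
      (fun (w : List (Equiv.Perm (Fin n))) (B : π.parts) =>
        w.filter (fun τ => decide (τ.support ⊆ B.1)))
      {w : List (Equiv.Perm (Fin n)) |
        w.length = r ∧ WeaklyMonotoneList w ∧
        ∀ τ ∈ w, ∃ B ∈ π.parts, τ.support ⊆ B}
      {g : π.parts → List (Equiv.Perm (Fin n)) |
        (∀ B : π.parts,
          WeaklyMonotoneList (g B) ∧ ∀ τ ∈ g B, τ.support ⊆ B.1) ∧
        ∑ B : π.parts, (g B).length = r} := by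
  refine ⟨?_, ?_, ?_⟩
  · rintro w ⟨hlen, ⟨hswap, hsort⟩, hblock⟩
    refine ⟨fun B => ⟨⟨fun τ hτ => hswap τ (List.mem_of_mem_filter hτ),
      hsort.filter _⟩, fun τ hτ => ?_⟩, ?_⟩
    · have := (List.mem_filter.mp hτ).2
      simpa using this
    · rw [sum_filter_length π w hswap hblock, hlen]
  · rintro w ⟨hlen, ⟨hswap, hsort⟩, hblock⟩ w' ⟨hlen', ⟨hswap', hsort'⟩, hblock'⟩ heq
    exact inj_aux π w w' hswap hblock hswap' hblock' hsort hsort'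
      (fun B hB => congrFun heq ⟨B, hB⟩)
  · rintro g ⟨hg1, hg2⟩
    obtain ⟨w, h1, h2, h3, h4⟩ := surj_aux π r g hg1 hg2
    exact ⟨w, ⟨h1, h2, h3⟩, funext h4⟩
end

section
/- Let n ≥ 1, let α ∈ S_n, and let τ_1,…,τ_r be transpositions of [n] such that the subgroup of S_n generated by α, τ_1,…,τ_r acts transitively on [n]. Set β = α τ_1 ⋯ τ_r. Then #α + #β − r = 2 − 2d for some integer d ≥ 0; equivalently, r ≥ #α + #β − 2 and r − #α − #β is even. -/
open Equiv Equiv.Perm Subgroup MulAction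
set_option linter.unusedSectionVars false

section Setoids

variable {α : Type*}

/-- The join of an equivalence relation with the pair `(a,b)`. -/
def pairJoin (t : Setoid α) (a b : α) : Setoid α where
  r x y := t.r x y ∨ (t.r x a ∧ t.r b y) ∨ (t.r x b ∧ t.r a y)
  iseqv := by
    constructor
    · intro x; exact Or.inl (t.refl x)
    · rintro x y (h | ⟨h1, h2⟩ | ⟨h1, h2⟩)
      · exact Or.inl (t.symm h)
      · exact Or.inr (Or.inr ⟨t.symm h2, t.symm h1⟩)
      · exact Or.inr (Or.inl ⟨t.symm h2, t.symm h1⟩)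
    · rintro x y z (h | ⟨h1, h2⟩ | ⟨h1, h2⟩) (k | ⟨k1, k2⟩ | ⟨k1, k2⟩)
      · exact Or.inl (t.trans h k)
      · exact Or.inr (Or.inl ⟨t.trans h k1, k2⟩)
      · exact Or.inr (Or.inr ⟨t.trans h k1, k2⟩)
      · exact Or.inr (Or.inl ⟨h1, t.trans h2 k⟩)
      · exact Or.inl (t.trans (t.trans h1 (t.symm (t.trans h2 k1))) k2)
      · exact Or.inl (t.trans h1 k2)
      · exact Or.inr (Or.inr ⟨h1, t.trans h2 k⟩)
      · exact Or.inl (t.trans h1 k2)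
      · exact Or.inl (t.trans (t.trans h1 (t.symm (t.trans h2 k1))) k2)

lemma pairJoin_r {t : Setoid α} {a b x y : α} :
    (pairJoin t a b).r x y ↔
      t.r x y ∨ (t.r x a ∧ t.r b y) ∨ (t.r x b ∧ t.r a y) := Iff.rfl

lemma card_quotient_eq_of_iff {r r' : Setoid α} (h : ∀ x y, r.r x y ↔ r'.r x y) :
    Nat.card (Quotient r) = Nat.card (Quotient r') :=
  Nat.card_congr (Quotient.congrRight h)

lemma pairJoin_eq_self {t : Setoid α} {a b : α} (hab : t.r a b) (x y : α) :
    (pairJoin t a b).r x y ↔ t.r x y := by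
  constructor
  · rintro (h | ⟨h1, h2⟩ | ⟨h1, h2⟩)
    · exact h
    · exact t.trans (t.trans h1 hab) h2
    · exact t.trans (t.trans h1 (t.symm hab)) h2
  · exact Or.inl

/-- Joining one new pair to an equivalence relation on a finite type reduces the
number of classes by exactly one. -/
lemma card_quotient_pairJoin [Finite α] {t : Setoid α} {a b : α} (hab : ¬ t.r a b) :
    Nat.card (Quotient t) = Nat.card (Quotient (pairJoin t a b)) + 1 := by
  classical
  set t' := pairJoin t a b with ht'
  let φ : Quotient t → Quotient t' := Quotient.map' id (fun x y h => Or.inl h)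
  have hφ : ∀ x : α, φ (Quotient.mk t x) = Quotient.mk t' x := fun x => rfl
  have hb : ∀ x : α, Quotient.mk t x = Quotient.mk t b ↔ t.r x b := by
    intro x; exact ⟨Quotient.exact, Quotient.sound⟩
  let ψ : {q : Quotient t // q ≠ Quotient.mk t b} → Quotient t' := fun q => φ q.1
  have hbij : Function.Bijective ψ := by
    constructor
    · rintro ⟨q1, h1⟩ ⟨q2, h2⟩ h
      obtain ⟨x, rfl⟩ := Quotient.exists_rep q1
      obtain ⟨y, rfl⟩ := Quotient.exists_rep q2
      simp only [ψ, hφ] at h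
      have h' : t'.r x y := Quotient.exact h
      rcases h' with hxy | ⟨h1', h2'⟩ | ⟨h1', h2'⟩
      · exact Subtype.ext (Quotient.sound hxy)
      · exact absurd ((hb y).2 (t.symm h2')) h2
      · exact absurd ((hb x).2 h1') h1
    · intro q'
      obtain ⟨u, rfl⟩ := Quotient.exists_rep q'
      by_cases hu : t.r u b
      · refine ⟨⟨Quotient.mk t a, ?_⟩, ?_⟩
        · intro h; exact hab ((hb a).1 h)
        · show φ (Quotient.mk t a) = _
          rw [hφ]
          exact Quotient.sound (Or.inr (Or.inl ⟨t.refl a, t.symm hu⟩))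
      · refine ⟨⟨Quotient.mk t u, fun h => hu ((hb u).1 h)⟩, rfl⟩
  haveI : Finite (Quotient t) := Quotient.finite t
  have hcard : Nat.card {q : Quotient t // q ≠ Quotient.mk t b} = Nat.card (Quotient t') :=
    Nat.card_congr (Equiv.ofBijective ψ hbij)
  haveI : Fintype (Quotient t) := Fintype.ofFinite _
  rw [← hcard]
  rw [Nat.card_eq_fintype_card, Nat.card_eq_fintype_card]
  have h1 : Fintype.card {q : Quotient t // q ≠ Quotient.mk t b}
      = Fintype.card (Quotient t) - 1 := by
    rw [Fintype.card_subtype_compl, Fintype.card_subtype_eq]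
  haveI : Nonempty (Quotient t) := ⟨Quotient.mk t b⟩
  have h2 : 0 < Fintype.card (Quotient t) := Fintype.card_pos
  omega

end Setoids

section Orbits

variable {α : Type*} [DecidableEq α]

lemma orel_of_mem {G : Subgroup (Perm α)} {g : Perm α} (hg : g ∈ G) (y : α) :
    (orbitRel G α).r (g y) y :=
  ⟨⟨g, hg⟩, rfl⟩

lemma orel_mono {G K : Subgroup (Perm α)} (h : G ≤ K) {x y : α}
    (hxy : (orbitRel G α).r x y) : (orbitRel K α).r x y := by
  obtain ⟨⟨g, hg⟩, rfl⟩ := hxy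
  exact ⟨⟨g, h hg⟩, rfl⟩

/-- The orbit relation of the subgroup generated by `S` and one extra transposition
`swap a b` is the join of the orbit relation of `⟨S⟩` with the pair `(a,b)`. -/
lemma orbitRel_closure_insert_swap (S : Set (Perm α)) (a b : α) (x y : α) :
    (orbitRel (closure (insert (Equiv.swap a b) S)) α).r x y ↔
      (pairJoin (orbitRel (closure S) α) a b).r x y := by
  set t := orbitRel (closure S) α with ht
  set t' := pairJoin t a b with ht'
  have key : ∀ (g : Perm α), g ∈ closure (insert (Equiv.swap a b) S) →
      ∀ z : α, t'.r (g z) z := by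
    intro g hg
    refine closure_induction (p := fun g _ => ∀ z : α, t'.r (g z) z) ?_ ?_ ?_ ?_ hg
    · intro w hw z
      rcases Set.mem_insert_iff.1 hw with hw0 | hw
      · subst hw0
        by_cases hza : z = a
        · rw [hza, Equiv.swap_apply_left]
          exact Or.inr (Or.inr ⟨t.refl b, t.refl a⟩)
        · by_cases hzb : z = b
          · rw [hzb, Equiv.swap_apply_right]
            exact Or.inr (Or.inl ⟨t.refl a, t.refl b⟩)
          · rw [Equiv.swap_apply_of_ne_of_ne hza hzb]
      · exact Or.inl (orel_of_mem (subset_closure hw) z)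
    · intro z
      simpa using t'.refl z
    · intro u v hu hv pu pv z
      have h1 : (u * v) z = u (v z) := rfl
      rw [h1]
      exact t'.trans (pu (v z)) (pv z)
    · intro u hu pu z
      have := pu (u⁻¹ z)
      rw [← Equiv.Perm.mul_apply, mul_inv_cancel, Equiv.Perm.one_apply] at this
      exact t'.symm this
  constructor
  · rintro ⟨⟨g, hg⟩, rfl⟩
    exact key g hg y
  · have hmono : ∀ x y : α, t.r x y →
        (orbitRel (closure (insert (Equiv.swap a b) S)) α).r x y :=
      fun x y h => orel_mono (closure_mono (Set.subset_insert _ _)) h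
    have hab : (orbitRel (closure (insert (Equiv.swap a b) S)) α).r a b := by
      have : Equiv.swap a b ∈ closure (insert (Equiv.swap a b) S) :=
        subset_closure (Set.mem_insert _ _)
      have h := orel_of_mem this b
      rwa [Equiv.swap_apply_right] at h
    set T := orbitRel (closure (insert (Equiv.swap a b) S)) α with hT
    rintro (h | ⟨h1, h2⟩ | ⟨h1, h2⟩)
    · exact hmono _ _ h
    · exact T.trans (hmono _ _ h1) (T.trans hab (hmono _ _ h2))
    · exact T.trans (hmono _ _ h1) (T.trans (T.symm hab) (hmono _ _ h2))

lemma card_orbitRel_insert_swap_of_rel [Finite α] {S : Set (Perm α)} {a b : α}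
    (hr : (orbitRel (closure S) α).r a b) :
    Nat.card (Quotient (orbitRel (closure (insert (Equiv.swap a b) S)) α)) =
      Nat.card (Quotient (orbitRel (closure S) α)) :=
  card_quotient_eq_of_iff fun x y =>
    (orbitRel_closure_insert_swap S a b x y).trans (pairJoin_eq_self hr x y)

lemma card_orbitRel_insert_swap_of_not_rel [Finite α] {S : Set (Perm α)} {a b : α}
    (hr : ¬ (orbitRel (closure S) α).r a b) :
    Nat.card (Quotient (orbitRel (closure S) α)) =
      Nat.card (Quotient (orbitRel (closure (insert (Equiv.swap a b) S)) α)) + 1 := by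
  rw [card_quotient_pairJoin hr]
  congr 1
  exact (card_quotient_eq_of_iff (orbitRel_closure_insert_swap S a b)).symm

lemma orbitRel_closure_singleton (σ : Perm α) (x y : α) :
    (orbitRel (closure {σ}) α).r x y ↔ σ.SameCycle x y := by
  rw [← zpowers_eq_closure]
  constructor
  · rintro ⟨⟨g, hg⟩, rfl⟩
    obtain ⟨k, rfl⟩ := Subgroup.mem_zpowers_iff.1 hg
    exact (Equiv.Perm.SameCycle.symm ⟨k, rfl⟩ : σ.SameCycle _ y).symm |>.symm
  · rintro ⟨k, rfl⟩
    refine ⟨⟨σ ^ (-k), Subgroup.zpow_mem _ (Subgroup.mem_zpowers σ) _⟩, ?_⟩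
    show (σ ^ (-k)) ((σ ^ k) x) = x
    simp [← Equiv.Perm.mul_apply, ← zpow_add]

end Orbits

section CycleCount

variable {n : ℕ}

/-- The same-cycle setoid of a permutation. -/
def scSetoid (σ : Perm (Fin n)) : Setoid (Fin n) :=
  ⟨σ.SameCycle, ⟨fun x => Equiv.Perm.SameCycle.refl σ x, fun h => h.symm, fun h k => h.trans k⟩⟩

lemma card_scSetoid (σ : Perm (Fin n)) :
    Nat.card (Quotient (scSetoid σ)) = cycleCount σ := by
  classical
  let F : Fin n → {x : Fin n // σ x = x} ⊕ {c : Perm (Fin n) // c ∈ σ.cycleFactorsFinset} :=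
    fun x =>
      if h : σ x = x then Sum.inl ⟨x, h⟩
      else Sum.inr ⟨σ.cycleOf x,
        Equiv.Perm.cycleOf_mem_cycleFactorsFinset_iff.2 (Equiv.Perm.mem_support.2 h)⟩
  have hF : ∀ x y : Fin n, σ.SameCycle x y → F x = F y := by
    intro x y h
    by_cases hx : σ x = x
    · obtain ⟨i, hi⟩ := h
      have : y = x := by
        rw [← hi, Equiv.Perm.zpow_apply_eq_self_of_apply_eq_self hx]
      subst this; rfl
    · by_cases hy : σ y = y
      · obtain ⟨i, hi⟩ := h.symm
        have : x = y := by
          rw [← hi, Equiv.Perm.zpow_apply_eq_self_of_apply_eq_self hy]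
        subst this; rfl
      · simp only [F, dif_neg hx, dif_neg hy]
        exact congrArg _ (Subtype.ext h.cycleOf_eq)
  let Fl : Quotient (scSetoid σ) →
      {x : Fin n // σ x = x} ⊕ {c : Perm (Fin n) // c ∈ σ.cycleFactorsFinset} :=
    Quotient.lift F hF
  have hbij : Function.Bijective Fl := by
    constructor
    · intro q1 q2 h
      obtain ⟨x, rfl⟩ := Quotient.exists_rep q1
      obtain ⟨y, rfl⟩ := Quotient.exists_rep q2
      have h' : F x = F y := h
      apply Quotient.sound
      show σ.SameCycle x y
      by_cases hx : σ x = x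
      · by_cases hy : σ y = y
        · have hxy : x = y := by
            simpa [F, dif_pos hx, dif_pos hy, Subtype.ext_iff] using h'
          exact hxy ▸ Equiv.Perm.SameCycle.refl σ x
        · exact absurd h' (by simp [F, dif_pos hx, dif_neg hy])
      · by_cases hy : σ y = y
        · exact absurd h' (by simp [F, dif_pos hy, dif_neg hx])
        · have hc : σ.cycleOf x = σ.cycleOf y := by
            simpa [F, dif_neg hx, dif_neg hy, Subtype.ext_iff] using h'
          have : y ∈ (σ.cycleOf y).support :=
            (Equiv.Perm.mem_support_cycleOf_iff' hy).2 (Equiv.Perm.SameCycle.refl σ y)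
          rw [← hc] at this
          exact (Equiv.Perm.mem_support_cycleOf_iff' hx).1 this
    · rintro (⟨x, hx⟩ | ⟨c, hc⟩)
      · exact ⟨Quotient.mk _ x, by show F x = _; simp [F, dif_pos hx]⟩
      · have hcyc : c.IsCycle := (Equiv.Perm.mem_cycleFactorsFinset_iff.1 hc).1
        obtain ⟨a, ha⟩ := hcyc.nonempty_support
        have hsa : σ a ≠ a :=
          Equiv.Perm.mem_support.1 (Equiv.Perm.mem_cycleFactorsFinset_support_le hc ha)
        refine ⟨Quotient.mk _ a, ?_⟩
        show F a = _
        simp only [F, dif_neg hsa]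
        exact congrArg _ (Subtype.ext (Equiv.Perm.cycle_is_cycleOf ha hc).symm)
  have := Nat.card_congr (Equiv.ofBijective Fl hbij)
  rw [this, Nat.card_sum]
  have h1 : Nat.card {x : Fin n // σ x = x} = n - σ.support.card := by
    rw [Nat.card_eq_fintype_card, Fintype.card_subtype]
    have := Finset.card_filter_add_card_filter_not
      (s := (Finset.univ : Finset (Fin n))) (p := fun x => σ x = x)
    have hsupp : σ.support = Finset.univ.filter (fun x => ¬ σ x = x) := by
      ext x; simp [Equiv.Perm.mem_support]
    rw [Finset.card_univ, Fintype.card_fin] at this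
    rw [hsupp]
    omega
  have h2 : Nat.card {c : Perm (Fin n) // c ∈ σ.cycleFactorsFinset} =
      Multiset.card σ.cycleType := by
    rw [Nat.card_eq_fintype_card, Fintype.card_coe, Equiv.Perm.cycleType_def,
      Multiset.card_map]
    rfl
  rw [h1, h2]; rfl

lemma card_orbitRel_singleton (σ : Perm (Fin n)) :
    Nat.card (Quotient (orbitRel (closure {σ}) (Fin n))) = cycleCount σ := by
  rw [card_quotient_eq_of_iff (r' := scSetoid σ) (orbitRel_closure_singleton σ),
    card_scSetoid]

end CycleCount

section Walk

variable {n : ℕ}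

/-- If `a` and `b` are in different cycles of `σ`, then they are in the same cycle
of `σ * swap a b`. -/
lemma sameCycle_mul_swap_of_not_sameCycle {σ : Perm (Fin n)} {a b : Fin n}
    (hab : a ≠ b) (h : ¬ σ.SameCycle a b) : (σ * Equiv.swap a b).SameCycle a b := by
  classical
  set σ' := σ * Equiv.swap a b with hσ'
  have hP : ∃ m : ℕ, 0 < m ∧ (σ ^ m) b = b :=
    ⟨orderOf σ, orderOf_pos σ, by rw [pow_orderOf_eq_one]; rfl⟩
  set m := Nat.find hP with hm
  obtain ⟨hm0, hmb⟩ := Nat.find_spec hP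
  have key : ∀ k, 0 < k → k ≤ m → (σ' ^ k) a = (σ ^ k) b := by
    intro k hk
    induction k with
    | zero => omega
    | succ k ih =>
      intro hkm
      rcases Nat.eq_zero_or_pos k with rfl | hk0
      · show σ' a = σ b
        rw [hσ']
        simp [Equiv.Perm.mul_apply, Equiv.swap_apply_left]
      · have hkm' : k < m := by omega
        have ihk := ih hk0 (le_of_lt hkm')
        have hne_b : (σ ^ k) b ≠ b := by
          intro hfix
          exact Nat.find_min hP hkm' ⟨hk0, hfix⟩
        have hne_a : (σ ^ k) b ≠ a := by
          intro hfix
          exact h (Equiv.Perm.SameCycle.symm ⟨(k : ℤ), by rw [zpow_natCast]; exact hfix⟩)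
        have : (σ' ^ (k + 1)) a = σ' ((σ' ^ k) a) := by
          rw [pow_succ']; rfl
        rw [this, ihk, hσ']
        show σ (Equiv.swap a b ((σ ^ k) b)) = (σ ^ (k+1)) b
        rw [Equiv.swap_apply_of_ne_of_ne hne_a hne_b, pow_succ']
        rfl
  refine ⟨(m : ℤ), ?_⟩
  rw [zpow_natCast, key m hm0 le_rfl, hmb]

lemma cycleCount_mul_swap_ne {σ : Perm (Fin n)} {a b : Fin n} (hab : a ≠ b) :
    cycleCount (σ * Equiv.swap a b) ≠ cycleCount σ := by
  have hsign : ∀ τ : Perm (Fin n), Equiv.Perm.sign τ = (-1 : ℤˣ) ^ (n + cycleCount τ) := by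
    intro τ
    rw [Equiv.Perm.sign_of_cycleType, Equiv.Perm.sum_cycleType]
    have hs : τ.support.card ≤ n := by
      simpa using Finset.card_le_univ τ.support
    have hk : n + cycleCount τ =
        (τ.support.card + Multiset.card τ.cycleType) + 2 * (n - τ.support.card) := by
      unfold cycleCount; omega
    rw [hk]
    conv_rhs => rw [pow_add, pow_mul]
    norm_num
  intro hcc
  have h1 : Equiv.Perm.sign (σ * Equiv.swap a b) = Equiv.Perm.sign σ := by
    rw [hsign, hsign, hcc]
  rw [Equiv.Perm.sign_mul, Equiv.Perm.sign_swap hab] at h1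
  have : (-1 : ℤˣ) = 1 := by
    apply mul_left_cancel (a := Equiv.Perm.sign σ)
    rw [mul_one]
    exact h1
  exact absurd this (by decide)

end Walk

section Dichotomy

variable {n : ℕ}

lemma closure_insert_swap_mul (σ : Perm (Fin n)) (a b : Fin n) :
    closure (insert (Equiv.swap a b) {σ}) =
      closure (insert (Equiv.swap a b) {σ * Equiv.swap a b}) := by
  have hττ : Equiv.swap a b * Equiv.swap a b = 1 := Equiv.swap_mul_self a b
  apply le_antisymm
  · rw [closure_le]
    intro x hx
    simp only [Set.mem_insert_iff, Set.mem_singleton_iff] at hx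
    rcases hx with h | h
    · rw [h]
      exact subset_closure (Set.mem_insert _ _)
    · have hσ : x = (σ * Equiv.swap a b) * Equiv.swap a b := by
        rw [h, mul_assoc, hττ, mul_one]
      rw [hσ]
      exact mul_mem
        (subset_closure (Set.mem_insert_iff.2 (Or.inr (Set.mem_singleton _))))
        (subset_closure (Set.mem_insert _ _))
  · rw [closure_le]
    intro x hx
    simp only [Set.mem_insert_iff, Set.mem_singleton_iff] at hx
    rcases hx with h | h
    · rw [h]
      exact subset_closure (Set.mem_insert _ _)
    · rw [h]
      exact mul_mem
        (subset_closure (Set.mem_insert_iff.2 (Or.inr (Set.mem_singleton _))))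
        (subset_closure (Set.mem_insert _ _))

lemma cycleCount_mul_swap_of_sameCycle {σ : Perm (Fin n)} {a b : Fin n}
    (hab : a ≠ b) (hs : σ.SameCycle a b) :
    cycleCount (σ * Equiv.swap a b) = cycleCount σ + 1 := by
  have hr : (orbitRel (closure {σ}) (Fin n)).r a b :=
    (orbitRel_closure_singleton σ a b).2 hs
  have c1 := card_orbitRel_insert_swap_of_rel (S := {σ}) hr
  by_cases hsc' : (σ * Equiv.swap a b).SameCycle a b
  · exfalso
    have hr' : (orbitRel (closure {σ * Equiv.swap a b}) (Fin n)).r a b :=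
      (orbitRel_closure_singleton _ a b).2 hsc'
    have c2 := card_orbitRel_insert_swap_of_rel (S := {σ * Equiv.swap a b}) hr'
    rw [← closure_insert_swap_mul] at c2
    have : cycleCount (σ * Equiv.swap a b) = cycleCount σ := by
      rw [← card_orbitRel_singleton, ← card_orbitRel_singleton (σ := σ), ← c1, ← c2]
    exact cycleCount_mul_swap_ne hab this
  · have hr' : ¬ (orbitRel (closure {σ * Equiv.swap a b}) (Fin n)).r a b := by
      intro h
      exact hsc' ((orbitRel_closure_singleton _ a b).1 h)
    have c2 := card_orbitRel_insert_swap_of_not_rel (S := {σ * Equiv.swap a b}) hr'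
    rw [← closure_insert_swap_mul] at c2
    rw [← card_orbitRel_singleton, ← card_orbitRel_singleton (σ := σ), c2, c1]

lemma cycleCount_mul_swap_of_not_sameCycle {σ : Perm (Fin n)} {a b : Fin n}
    (hab : a ≠ b) (hns : ¬ σ.SameCycle a b) :
    cycleCount (σ * Equiv.swap a b) + 1 = cycleCount σ := by
  have hr : ¬ (orbitRel (closure {σ}) (Fin n)).r a b := fun h =>
    hns ((orbitRel_closure_singleton σ a b).1 h)
  have c1 := card_orbitRel_insert_swap_of_not_rel (S := {σ}) hr
  have hsc' : (σ * Equiv.swap a b).SameCycle a b :=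
    sameCycle_mul_swap_of_not_sameCycle hab hns
  have hr' : (orbitRel (closure {σ * Equiv.swap a b}) (Fin n)).r a b :=
    (orbitRel_closure_singleton _ a b).2 hsc'
  have c2 := card_orbitRel_insert_swap_of_rel (S := {σ * Equiv.swap a b}) hr'
  rw [← closure_insert_swap_mul] at c2
  rw [← card_orbitRel_singleton, ← card_orbitRel_singleton (σ := σ), c1, c2]

end Dichotomy

section Main

variable {n : ℕ}

lemma riemann_hurwitz_key (n r : ℕ) (α : Equiv.Perm (Fin n))
    (f : Fin r → Equiv.Perm (Fin n)) (hf : IsTranspositionTuple f) :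
    ∃ d : ℕ, cycleCount α + cycleCount (α * tupleProd f) + 2 * d =
      r + 2 * Nat.card (Quotient (orbitRel (closure ({α} ∪ Set.range f)) (Fin n))) := by
  induction r generalizing α with
  | zero =>
    have h1 : tupleProd f = 1 := by simp [tupleProd]
    have h2 : Set.range f = ∅ := Set.range_eq_empty f
    refine ⟨0, ?_⟩
    rw [h1, h2, mul_one, Set.union_empty, card_orbitRel_singleton]
    ring
  | succ r ih =>
    obtain ⟨a, b, hab, hτ⟩ := hf 0
    set τ := f 0 with hτ0
    set g : Fin r → Perm (Fin n) := fun i => f i.succ with hgdef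
    have hg : IsTranspositionTuple g := fun i => hf i.succ
    have hprod : tupleProd f = τ * tupleProd g := by
      rw [tupleProd, List.ofFn_succ, List.prod_cons]; rfl
    set α' := α * τ with hα'
    have hττ : τ * τ = 1 := by rw [hτ]; exact Equiv.swap_mul_self a b
    have hαα' : α = α' * τ := by rw [hα', mul_assoc, hττ, mul_one]
    have hββ : α * tupleProd f = α' * tupleProd g := by
      rw [hprod, ← mul_assoc, ← hα']
    obtain ⟨d', hd'⟩ := ih α' g hg
    set S' : Set (Perm (Fin n)) := {α'} ∪ Set.range g with hS'
    have hSS : closure ({α} ∪ Set.range f) = closure (insert τ S') := by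
      apply le_antisymm
      · rw [closure_le]
        intro x hx
        rcases hx with h | h
        · rw [Set.mem_singleton_iff] at h
          rw [h, hαα']
          exact mul_mem
            (subset_closure (Set.mem_insert_iff.2 (Or.inr (Or.inl rfl))))
            (subset_closure (Set.mem_insert _ _))
        · obtain ⟨i, rfl⟩ := h
          induction i using Fin.cases with
          | zero => exact subset_closure (Set.mem_insert _ _)
          | succ j =>
            exact subset_closure
              (Set.mem_insert_iff.2 (Or.inr (Or.inr ⟨j, rfl⟩)))
      · rw [closure_le]
        intro x hx
        rcases Set.mem_insert_iff.1 hx with h | h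
        · rw [h, hτ0]
          exact subset_closure (Or.inr ⟨0, rfl⟩)
        · rcases h with h | h
          · rw [Set.mem_singleton_iff] at h
            rw [h, hα', hτ0]
            exact mul_mem (subset_closure (Or.inl rfl))
              (subset_closure (Or.inr ⟨0, rfl⟩))
          · obtain ⟨j, rfl⟩ := h
            exact subset_closure (Or.inr ⟨j.succ, rfl⟩)
    have hτab : insert τ S' = insert (Equiv.swap a b) S' := by rw [hτ]
    have hαswap : α = α' * Equiv.swap a b := by rw [← hτ]; exact hαα'
    by_cases hrel : (orbitRel (closure S') (Fin n)).r a b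
    · have hc : Nat.card (Quotient (orbitRel (closure ({α} ∪ Set.range f)) (Fin n))) =
          Nat.card (Quotient (orbitRel (closure S') (Fin n))) := by
        rw [hSS, hτab]
        exact card_orbitRel_insert_swap_of_rel hrel
      by_cases hsc : α'.SameCycle a b
      · have hcc : cycleCount α = cycleCount α' + 1 := by
          rw [hαswap]
          exact cycleCount_mul_swap_of_sameCycle hab hsc
        refine ⟨d', ?_⟩
        rw [hββ, hc, hcc]
        omega
      · have hcc : cycleCount α + 1 = cycleCount α' := by
          rw [hαswap]
          exact cycleCount_mul_swap_of_not_sameCycle hab hsc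
        refine ⟨d' + 1, ?_⟩
        rw [hββ, hc]
        omega
    · have hc : Nat.card (Quotient (orbitRel (closure S') (Fin n))) =
          Nat.card (Quotient (orbitRel (closure ({α} ∪ Set.range f)) (Fin n))) + 1 := by
        rw [hSS, hτab]
        exact card_orbitRel_insert_swap_of_not_rel hrel
      have hsc : ¬ α'.SameCycle a b := by
        intro h
        apply hrel
        have h1 : (orbitRel (closure {α'}) (Fin n)).r a b :=
          (orbitRel_closure_singleton α' a b).2 h
        exact orel_mono (closure_mono (by intro x hx; exact Or.inl hx)) h1
      have hcc : cycleCount α + 1 = cycleCount α' := by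
        rw [hαswap]
        exact cycleCount_mul_swap_of_not_sameCycle hab hsc
      refine ⟨d', ?_⟩
      rw [hββ]
      omega


/-- (Riemann–Hurwitz parity/bound.)  If `α ∈ S_n` and transpositions
`τ_1, …, τ_r` generate together with `α` a transitive subgroup of `S_n`, and
`β = α τ_1 ⋯ τ_r`, then `#α + #β - r = 2 - 2d` for some integer `d ≥ 0`
(equivalently, `#α + #β + 2d = r + 2`). -/
theorem riemann_hurwitz_defect (n r : ℕ) (hn : 1 ≤ n) (α : Equiv.Perm (Fin n))
    (f : Fin r → Equiv.Perm (Fin n)) (hf : IsTranspositionTuple f)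
    (htrans : ActsTransitively ({α} ∪ Set.range f)) :
    ∃ d : ℕ, cycleCount α + cycleCount (α * tupleProd f) + 2 * d = r + 2 := by
  obtain ⟨d, hd⟩ := riemann_hurwitz_key n r α f hf
  have hc : Nat.card (Quotient (orbitRel (closure ({α} ∪ Set.range f)) (Fin n))) = 1 := by
    haveI : Nonempty (Fin n) := ⟨⟨0, hn⟩⟩
    rw [Nat.card_eq_one_iff_unique]
    constructor
    · constructor
      intro q1 q2
      obtain ⟨x, rfl⟩ := Quotient.exists_rep q1
      obtain ⟨y, rfl⟩ := Quotient.exists_rep q2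
      apply Quotient.sound
      obtain ⟨gg, hgg, hgx⟩ := htrans y x
      exact ⟨⟨gg, hgg⟩, hgx⟩
    · exact ⟨Quotient.mk _ Classical.ofNonempty⟩
  rw [hc] at hd
  exact ⟨d, hd⟩

end Main
end
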